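/- arXiv:0903.3109 — 5 statements merged into one kernel-verified Lean document; each statement's English description precedes it below -/
import Mathlib

section
/- If f : [0,1] → ℝ is a nonnegative convex C² function satisfying f(1-x) = f(x) for all x ∈ [0,1], then all Fourier coefficients of f are nonnegative: for every n ∈ ℤ, the integral ∫₀¹ f(x) e^{-2πinx} dx is a nonnegative real number. -/
open MeasureTheory Real Set

private lemma aux_deriv_nonneg' {g : ℝ → ℝ} {g' x : ℝ} (hx : x ∈ Set.Icc (0:ℝ) 1)
    (hm : MonotoneOn g (Set.Icc 0 1)) (hg : HasDerivWithinAt g g' (Set.Icc 0 1) x) :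
    0 ≤ g' := by
  rw [hasDerivWithinAt_iff_tendsto_slope] at hg
  have hslope : ∀ y ∈ Set.Icc (0:ℝ) 1 \ {x}, 0 ≤ slope g x y := by
    intro y hy
    have hyx : y ≠ x := by simpa using hy.2
    rcases lt_or_gt_of_ne hyx with h | h
    · rw [slope_def_field, div_nonneg_iff]
      exact Or.inr ⟨sub_nonpos.2 (hm hy.1 hx h.le), sub_nonpos.2 h.le⟩
    · rw [slope_def_field]
      exact div_nonneg (sub_nonneg.2 (hm hx hy.1 h.le)) (sub_nonneg.2 h.le)
  have hne : (nhdsWithin x (Set.Icc (0:ℝ) 1 \ {x})).NeBot := by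
    rcases lt_or_eq_of_le hx.2 with h1 | h1
    · have hsub : Set.Ioc x 1 ⊆ Set.Icc 0 1 \ {x} := fun y hy =>
        ⟨⟨le_trans hx.1 hy.1.le, hy.2⟩, fun hy' => absurd (Set.mem_singleton_iff.1 hy') hy.1.ne'⟩
      have h2 : (nhdsWithin x (Set.Ioc x 1)).NeBot := by
        rw [nhdsWithin_Ioc_eq_nhdsGT h1]; infer_instance
      exact h2.mono (nhdsWithin_mono x hsub)
    · have hsub : Set.Ico 0 x ⊆ Set.Icc 0 1 \ {x} := fun y hy =>
        ⟨⟨hy.1, h1 ▸ hy.2.le⟩, fun hy' => absurd (Set.mem_singleton_iff.1 hy') hy.2.ne⟩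
      have h2 : (nhdsWithin x (Set.Ico 0 x)).NeBot := by
        rw [nhdsWithin_Ico_eq_nhdsLT (h1 ▸ one_pos)]; infer_instance
      exact h2.mono (nhdsWithin_mono x hsub)
  exact ge_of_tendsto hg (eventually_nhdsWithin_of_forall hslope)

private lemma aux_cos_nonneg (f : ℝ → ℝ) (n : ℤ) (hn : n ≠ 0)
    (hconv : ConvexOn ℝ (Set.Icc (0:ℝ) 1) f)
    (hC2 : ContDiffOn ℝ 2 f (Set.Icc (0:ℝ) 1)) :
    0 ≤ ∫ x in (0:ℝ)..1, f x * Real.cos (2 * Real.pi * n * x) := by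
  set c : ℝ := 2 * Real.pi * n with hc
  have hcne : c ≠ 0 := by
    simp only [hc]
    have : (n:ℝ) ≠ 0 := Int.cast_ne_zero.2 hn
    positivity
  have hsinc : Real.sin c = 0 := by
    have := Real.sin_int_mul_two_pi_sub 0 n
    simp at this
    rw [hc, show (2:ℝ) * Real.pi * n = n * (2 * Real.pi) by ring]; exact this
  have hcosc : Real.cos c = 1 := by
    rw [hc, show (2:ℝ) * Real.pi * n = n * (2 * Real.pi) by ring]
    exact Real.cos_int_mul_two_pi n
  have hIcc : Set.uIcc (0:ℝ) 1 = Set.Icc 0 1 := Set.uIcc_of_le (by norm_num)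
  have hud : UniqueDiffOn ℝ (Set.Icc (0:ℝ) 1) := uniqueDiffOn_Icc one_pos
  set f₁ : ℝ → ℝ := derivWithin f (Set.Icc 0 1) with hf₁
  set f₂ : ℝ → ℝ := derivWithin f₁ (Set.Icc 0 1) with hf₂
  have hd1 : DifferentiableOn ℝ f (Set.Icc 0 1) := hC2.differentiableOn (by norm_num)
  have hf1C1 : ContDiffOn ℝ 1 f₁ (Set.Icc 0 1) := hC2.derivWithin hud (by norm_num)
  have hd2 : DifferentiableOn ℝ f₁ (Set.Icc 0 1) := hf1C1.differentiableOn (by norm_num)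
  have hc2 : ContinuousOn f₂ (Set.Icc 0 1) :=
    (ContDiffOn.derivWithin (m := 0) hf1C1 hud (by norm_num)).continuousOn
  have hdf : ∀ x ∈ Set.uIcc (0:ℝ) 1, HasDerivWithinAt f (f₁ x) (Set.uIcc 0 1) x := by
    rw [hIcc]; exact fun x hx => (hd1 x hx).hasDerivWithinAt
  have hdf1 : ∀ x ∈ Set.uIcc (0:ℝ) 1, HasDerivWithinAt f₁ (f₂ x) (Set.uIcc 0 1) x := by
    rw [hIcc]; exact fun x hx => (hd2 x hx).hasDerivWithinAt
  have hv1 : ∀ x ∈ Set.uIcc (0:ℝ) 1,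
      HasDerivWithinAt (fun y => Real.sin (c * y) / c) (Real.cos (c * x)) (Set.uIcc 0 1) x := by
    intro x _
    have h : HasDerivAt (fun y => Real.sin (c * y) / c) (Real.cos (c * x) * c / c) x :=
      (((Real.hasDerivAt_sin (c * x)).comp x
        ((hasDerivAt_id x).const_mul c)).div_const c).congr_deriv (by simp [mul_comm])
    rw [mul_div_cancel_right₀ _ hcne] at h
    exact h.hasDerivWithinAt
  have hv2 : ∀ x ∈ Set.uIcc (0:ℝ) 1,
      HasDerivWithinAt (fun y => (1 - Real.cos (c * y)) / c) (Real.sin (c * x))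
        (Set.uIcc 0 1) x := by
    intro x _
    have h : HasDerivAt (fun y => (1 - Real.cos (c * y)) / c) (Real.sin (c * x) * c / c) x := by
      have h0 : HasDerivAt (fun y => Real.cos (c * y)) (-Real.sin (c * x) * c) x :=
        ((Real.hasDerivAt_cos (c * x)).comp x ((hasDerivAt_id x).const_mul c)).congr_deriv
          (by simp [mul_comm])
      exact (((hasDerivAt_const x (1:ℝ)).sub h0).div_const c).congr_deriv (by ring)
    rw [mul_div_cancel_right₀ _ hcne] at h
    exact h.hasDerivWithinAt
  have hif1 : IntervalIntegrable f₁ volume 0 1 :=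
    ContinuousOn.intervalIntegrable (by rw [hIcc]; exact hf1C1.continuousOn)
  have hif2 : IntervalIntegrable f₂ volume 0 1 :=
    ContinuousOn.intervalIntegrable (by rw [hIcc]; exact hc2)
  have hicos : IntervalIntegrable (fun x => Real.cos (c * x)) volume 0 1 :=
    (Real.continuous_cos.comp (continuous_const.mul continuous_id)).intervalIntegrable 0 1
  have hisin : IntervalIntegrable (fun x => Real.sin (c * x)) volume 0 1 :=
    (Real.continuous_sin.comp (continuous_const.mul continuous_id)).intervalIntegrable 0 1
  have ibp1 : (∫ x in (0:ℝ)..1, f x * Real.cos (c * x)) =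
      - ∫ x in (0:ℝ)..1, f₁ x * (Real.sin (c * x) / c) := by
    have := intervalIntegral.integral_mul_deriv_eq_deriv_mul_of_hasDerivWithinAt
      hdf hv1 hif1 hicos
    rw [this]; simp [hsinc]
  have ibp2 : (∫ x in (0:ℝ)..1, f₁ x * Real.sin (c * x)) =
      - ∫ x in (0:ℝ)..1, f₂ x * ((1 - Real.cos (c * x)) / c) := by
    have := intervalIntegral.integral_mul_deriv_eq_deriv_mul_of_hasDerivWithinAt
      hdf1 hv2 hif2 hisin
    rw [this]; simp [hcosc]
  have hmono : MonotoneOn f₁ (Set.Icc 0 1) := hconv.monotoneOn_derivWithin hd1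
  have hf2nn : ∀ x ∈ Set.Icc (0:ℝ) 1, 0 ≤ f₂ x := fun x hx =>
    aux_deriv_nonneg' hx hmono (hd2 x hx).hasDerivWithinAt
  set X := ∫ x in (0:ℝ)..1, f₂ x * (1 - Real.cos (c * x)) with hX
  have hXnn : 0 ≤ X :=
    intervalIntegral.integral_nonneg (by norm_num) (fun u hu =>
      mul_nonneg (hf2nn u hu) (sub_nonneg.2 (Real.cos_le_one _)))
  have e1 : (∫ x in (0:ℝ)..1, f₁ x * (Real.sin (c * x) / c)) =
      (∫ x in (0:ℝ)..1, f₁ x * Real.sin (c * x)) / c := by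
    rw [← intervalIntegral.integral_div]; simp_rw [mul_div_assoc]
  have e2 : (∫ x in (0:ℝ)..1, f₂ x * ((1 - Real.cos (c * x)) / c)) = X / c := by
    rw [hX, ← intervalIntegral.integral_div]; simp_rw [mul_div_assoc]
  rw [ibp1, e1, ibp2, e2]
  rw [show -(-(X / c) / c) = X / (c * c) by ring]
  exact div_nonneg hXnn (mul_self_nonneg c)

private lemma aux_sin_zero (f : ℝ → ℝ) (n : ℤ)
    (hsym : ∀ x ∈ Set.Icc (0:ℝ) 1, f (1 - x) = f x) :
    (∫ x in (0:ℝ)..1, f x * Real.sin (2 * Real.pi * n * x)) = 0 := by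
  set c : ℝ := 2 * Real.pi * n with hc
  have hsinc : Real.sin c = 0 := by
    have := Real.sin_int_mul_two_pi_sub 0 n
    simp at this
    rw [hc, show (2:ℝ) * Real.pi * n = n * (2 * Real.pi) by ring]; exact this
  have hcosc : Real.cos c = 1 := by
    rw [hc, show (2:ℝ) * Real.pi * n = n * (2 * Real.pi) by ring]
    exact Real.cos_int_mul_two_pi n
  set S := ∫ x in (0:ℝ)..1, f x * Real.sin (c * x) with hS
  have h1 : (∫ x in (0:ℝ)..1, f (1 - x) * Real.sin (c * (1 - x))) = S := by
    have := intervalIntegral.integral_comp_sub_left (a := (0:ℝ)) (b := 1)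
      (fun y => f y * Real.sin (c * y)) 1
    simpa using this
  have h2 : (∫ x in (0:ℝ)..1, f (1 - x) * Real.sin (c * (1 - x))) = -S := by
    rw [hS, ← intervalIntegral.integral_neg]
    apply intervalIntegral.integral_congr
    intro x hx
    rw [Set.uIcc_of_le (by norm_num : (0:ℝ) ≤ 1)] at hx
    simp only
    rw [hsym x hx]
    have : Real.sin (c * (1 - x)) = - Real.sin (c * x) := by
      rw [mul_sub, mul_one, Real.sin_sub, hsinc, hcosc]; ring
    rw [this]; ring
  have : S = -S := h1 ▸ h2
  linarith [this]

/-- If `f : [0,1] → ℝ` is a nonnegative convex `C²` function with `f(1-x) = f(x)`,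
then every Fourier coefficient `∫₀¹ f(x) e^{-2πinx} dx` is a nonnegative real number. -/
theorem fourier_coeff_nonneg_of_convex_symmetric (f : ℝ → ℝ)
    (hnonneg : ∀ x ∈ Set.Icc (0:ℝ) 1, 0 ≤ f x)
    (hconv : ConvexOn ℝ (Set.Icc (0:ℝ) 1) f)
    (hC2 : ContDiffOn ℝ 2 f (Set.Icc (0:ℝ) 1))
    (hsym : ∀ x ∈ Set.Icc (0:ℝ) 1, f (1 - x) = f x) :
    ∀ n : ℤ, ∃ r : ℝ, 0 ≤ r ∧
      (∫ x in (0:ℝ)..1, (f x : ℂ) * Complex.exp (-2 * Real.pi * Complex.I * n * x)) = r := by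
  intro n
  have hIcc : Set.uIcc (0:ℝ) 1 = Set.Icc 0 1 := Set.uIcc_of_le (by norm_num)
  have hcf : ContinuousOn f (Set.Icc (0:ℝ) 1) := hC2.continuousOn
  by_cases hn : n = 0
  · subst hn
    refine ⟨∫ x in (0:ℝ)..1, f x,
      intervalIntegral.integral_nonneg (by norm_num) (fun u hu => hnonneg u hu), ?_⟩
    have heq : ∀ x ∈ Set.uIcc (0:ℝ) 1,
        (f x : ℂ) * Complex.exp (-2 * Real.pi * Complex.I * ((0:ℤ):ℂ) * x) = ((f x : ℝ) : ℂ) := by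
      intro x _; simp
    rw [intervalIntegral.integral_congr heq, intervalIntegral.integral_ofReal]
  · set c : ℝ := 2 * Real.pi * n with hc
    set A := ∫ x in (0:ℝ)..1, f x * Real.cos (c * x) with hA
    have hAnn : 0 ≤ A := aux_cos_nonneg f n hn hconv hC2
    have hS : (∫ x in (0:ℝ)..1, f x * Real.sin (c * x)) = 0 := aux_sin_zero f n hsym
    refine ⟨A, hAnn, ?_⟩
    have heq : ∀ x ∈ Set.uIcc (0:ℝ) 1,
        (f x : ℂ) * Complex.exp (-2 * Real.pi * Complex.I * (n:ℂ) * x) =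
          ((f x * Real.cos (c * x) : ℝ) : ℂ) + ((-(f x * Real.sin (c * x)) : ℝ) : ℂ) * Complex.I := by
      intro x _
      have harg : (-2 * Real.pi * Complex.I * (n:ℂ) * x) = ((-(c * x) : ℝ) : ℂ) * Complex.I := by
        push_cast [hc]; ring
      rw [harg, Complex.exp_mul_I, ← Complex.ofReal_cos, ← Complex.ofReal_sin,
        Real.cos_neg, Real.sin_neg]
      push_cast
      ring
    rw [intervalIntegral.integral_congr heq]
    have hi1 : IntervalIntegrable (fun x => ((f x * Real.cos (c * x) : ℝ) : ℂ)) volume 0 1 := by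
      apply ContinuousOn.intervalIntegrable
      rw [hIcc]
      exact Complex.continuous_ofReal.comp_continuousOn
        (hcf.mul (Real.continuous_cos.comp (continuous_const.mul continuous_id)).continuousOn)
    have hi2 : IntervalIntegrable (fun x => ((-(f x * Real.sin (c * x)) : ℝ) : ℂ) * Complex.I)
        volume 0 1 := by
      apply ContinuousOn.intervalIntegrable
      rw [hIcc]
      exact (Complex.continuous_ofReal.comp_continuousOn
        ((hcf.mul (Real.continuous_sin.comp
          (continuous_const.mul continuous_id)).continuousOn).neg)).mul continuousOn_const
    rw [intervalIntegral.integral_add hi1 hi2, intervalIntegral.integral_mul_const,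
      intervalIntegral.integral_ofReal, intervalIntegral.integral_ofReal]
    have hz : (∫ x in (0:ℝ)..1, -(f x * Real.sin (c * x))) = 0 := by
      rw [intervalIntegral.integral_neg, hS, neg_zero]
    rw [hz]
    simp [hA]
end

section
/- Let f : 𝕋 → ℝ be given by f(x) = exp(-1/|x - 1/2| + 2) for x ≠ 1/2 and f(1/2) = 0. If P is a nonzero trigonometric polynomial and g is a measurable function on 𝕋 with f·g = P almost everywhere, then g ∉ L²(𝕋). -/
open MeasureTheory

/-- The function `f(x) = exp(-1/|x - 1/2| + 2)` for `x ≠ 1/2`, `f(1/2) = 0`. -/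
noncomputable def bumpFun : ℝ → ℝ := fun x =>
  if x = 1/2 then 0 else Real.exp (-(1 / |x - 1/2|) + 2)

lemma bumpFun_aux_pow_exp (m : ℕ) {t : ℝ} (ht : 0 < t) :
    (((m : ℝ) + 1) ^ (m + 1))⁻¹ * t⁻¹ ≤ t ^ m * Real.exp t⁻¹ := by
  have hn : (0:ℝ) < (m:ℝ) + 1 := by positivity
  set y : ℝ := (((m:ℝ) + 1) * t)⁻¹ with hy_def
  have hy : 0 < y := by positivity
  have h1 : t⁻¹ = ((m + 1 : ℕ) : ℝ) * y := by
    field_simp [hy_def]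
    rw [hy_def]; push_cast; field_simp
  have h2 : Real.exp t⁻¹ = (Real.exp y) ^ (m + 1) := by
    rw [h1, Real.exp_nat_mul]
  have h3 : y ^ (m + 1) ≤ (Real.exp y) ^ (m + 1) :=
    pow_le_pow_left₀ hy.le (by linarith [Real.add_one_le_exp y]) _
  have h4 : (((m : ℝ) + 1) ^ (m + 1))⁻¹ * t⁻¹ = t ^ m * y ^ (m + 1) := by
    rw [hy_def]
    have hn' : ((m:ℝ)+1) ≠ 0 := by positivity
    field_simp
    rw [one_div, inv_pow, mul_pow, pow_succ t m]
    field_simp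
  rw [h4, h2]
  exact mul_le_mul_of_nonneg_left h3 (by positivity)

/-- If `P` is a nonzero trigonometric polynomial and `g` is measurable with
`bumpFun · g = P` almost everywhere on the circle (realized as `[0,1]`), then `g ∉ L²`. -/
theorem not_memLp_of_bumpFun_mul_eq_trigPoly (s : Finset ℤ) (c : ℤ → ℂ)
    (P : ℝ → ℂ)
    (hP : P = fun x : ℝ => ∑ n ∈ s, c n * Complex.exp (2 * Real.pi * Complex.I * n * (x : ℂ)))
    (hPne : P ≠ 0)
    (g : ℝ → ℂ) (hgm : Measurable g)
    (h : (fun x => (bumpFun x : ℂ) * g x) =ᵐ[volume.restrict (Set.Icc (0:ℝ) 1)] P) :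
    ¬ MemLp g 2 (volume.restrict (Set.Icc (0:ℝ) 1)) := by
  intro hmem
  -- P is real-analytic everywhere
  have hPan : ∀ x : ℝ, AnalyticAt ℝ P x := by
    intro x
    rw [hP]
    apply Finset.analyticAt_fun_sum
    intro n _
    apply AnalyticAt.mul analyticAt_const
    apply AnalyticAt.comp (analyticAt_cexp.restrictScalars)
    exact AnalyticAt.mul analyticAt_const (Complex.ofRealCLM.analyticAt x)
  -- P is not eventually zero near 1/2
  have hne : ¬ ∀ᶠ x in nhds (1/2 : ℝ), P x = 0 := by
    intro hev
    apply hPne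
    funext x
    have hEq : Set.EqOn P 0 Set.univ :=
      AnalyticOnNhd.eqOn_zero_of_preconnected_of_eventuallyEq_zero
        (fun y _ => hPan y) isPreconnected_univ (Set.mem_univ (1/2 : ℝ)) hev
    exact hEq (Set.mem_univ x)
  obtain ⟨m, A, hA, hA0, heq⟩ :=
    ((hPan (1/2)).exists_eventuallyEq_pow_smul_nonzero_iff).mpr hne
  -- a lower bound for ‖A‖ near 1/2
  set cA : ℝ := ‖A (1/2 : ℝ)‖ / 2 with hcA_def
  have hcA : 0 < cA := by
    have := norm_pos_iff.mpr hA0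
    rw [hcA_def]; linarith
  have hAbig : ∀ᶠ x in nhds (1/2 : ℝ), cA < ‖A x‖ :=
    (hA.continuousAt.norm).eventually (eventually_gt_nhds (by rw [hcA_def]; linarith [norm_pos_iff.mpr hA0]))
  -- extract δ
  obtain ⟨ε, hε, hball⟩ := Metric.eventually_nhds_iff.mp (heq.and hAbig)
  set δ : ℝ := min (ε / 2) (1/2 : ℝ) with hδ_def
  have hδ : 0 < δ := by positivity
  have hδle : δ ≤ 1/2 := min_le_right _ _
  set S : Set ℝ := Set.Ioo (1/2 : ℝ) (1/2 + δ) with hS_def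
  have hSsub : S ⊆ Set.Icc (0:ℝ) 1 := by
    intro x hx
    constructor <;> [linarith [hx.1]; linarith [hx.2, hδle]]
  have hSball : ∀ x ∈ S, dist x (1/2 : ℝ) < ε := by
    intro x hx
    rw [Real.dist_eq, abs_of_pos (by linarith [hx.1])]
    have : δ ≤ ε / 2 := min_le_left _ _
    linarith [hx.2]
  -- integrability of ‖g‖² on S
  have hI : Integrable (fun x => ‖g x‖ ^ (2:ℝ))
      (volume.restrict (Set.Icc (0:ℝ) 1)) :=
    hmem.integrable_norm_rpow (by norm_num) (by norm_num)
  have hI2 : Integrable (fun x => ‖g x‖ ^ 2)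
      (volume.restrict (Set.Icc (0:ℝ) 1)) := by
    refine hI.congr (Filter.Eventually.of_forall fun x => ?_)
    simp only
    rw [← Real.rpow_natCast ‖g x‖ 2]
    norm_num
  have hIS : IntegrableOn (fun x => ‖g x‖ ^ 2) S volume := by
    have h1 := hI2.restrict (s := S)
    rwa [Measure.restrict_restrict measurableSet_Ioo,
      Set.inter_eq_self_of_subset_left hSsub] at h1
  -- the a.e. identity on S
  have hae : ∀ᵐ x ∂(volume.restrict S), (bumpFun x : ℂ) * g x = P x :=
    ae_restrict_of_ae_restrict_of_subset hSsub h
  -- the key constant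
  set K : ℝ := (cA * Real.exp (-2) * (((m:ℝ) + 1) ^ (m + 1))⁻¹) ^ 2 with hK_def
  have hK : 0 < K := by positivity
  -- pointwise bound
  have hbound : ∀ᵐ x ∂(volume.restrict S), K * ((x - 1/2)⁻¹) ^ 2 ≤ ‖g x‖ ^ 2 := by
    filter_upwards [hae, ae_restrict_mem measurableSet_Ioo] with x hfx hxS
    set t : ℝ := x - 1/2 with ht_def
    have ht : 0 < t := by simp only [ht_def]; linarith [hxS.1]
    have hxne : x ≠ (1/2 : ℝ) := hxS.1.ne'
    obtain ⟨hPx, hAx⟩ := hball (hSball x hxS)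
    -- bumpFun value
    have hb : bumpFun x = Real.exp (-(t⁻¹) + 2) := by
      rw [bumpFun, if_neg hxne, abs_of_pos ht, one_div]
    have hbpos : 0 < bumpFun x := by rw [hb]; exact Real.exp_pos _
    -- norms
    have hnorm : bumpFun x * ‖g x‖ = ‖P x‖ := by
      rw [← hfx, norm_mul, Complex.norm_real, Real.norm_eq_abs, abs_of_pos hbpos]
    have hPnorm : ‖P x‖ = t ^ m * ‖A x‖ := by
      rw [hPx, norm_smul, norm_pow, Real.norm_eq_abs, abs_of_pos ht]
    -- lower bound on ‖g x‖
    have hg1 : cA * t ^ m ≤ bumpFun x * ‖g x‖ := by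
      rw [hnorm, hPnorm, mul_comm cA]
      exact mul_le_mul_of_nonneg_left hAx.le (by positivity)
    have hg2 : cA * t ^ m * Real.exp (t⁻¹ - 2) ≤ ‖g x‖ := by
      have hbinv : (bumpFun x)⁻¹ = Real.exp (t⁻¹ - 2) := by
        rw [hb, ← Real.exp_neg]; ring_nf
      have := mul_le_mul_of_nonneg_right hg1 (le_of_lt (inv_pos.mpr hbpos))
      rw [mul_comm (bumpFun x) ‖g x‖, mul_assoc ‖g x‖ (bumpFun x) (bumpFun x)⁻¹, mul_inv_cancel₀ hbpos.ne', mul_one] at this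
      rwa [hbinv] at this
    have hg3 : cA * Real.exp (-2) * (((m:ℝ) + 1) ^ (m + 1))⁻¹ * t⁻¹ ≤ ‖g x‖ := by
      refine le_trans ?_ hg2
      have haux := bumpFun_aux_pow_exp m ht
      have : cA * t ^ m * Real.exp (t⁻¹ - 2)
          = cA * Real.exp (-2) * (t ^ m * Real.exp t⁻¹) := by
        rw [Real.exp_sub, Real.exp_neg]
        ring
      rw [this, mul_assoc]
      refine mul_le_mul_of_nonneg_left ?_ (by positivity)
      exact haux
    calc K * ((x - 1/2)⁻¹) ^ 2
        = (cA * Real.exp (-2) * (((m:ℝ) + 1) ^ (m + 1))⁻¹ * t⁻¹) ^ 2 := by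
          rw [hK_def, ← ht_def]; ring
      _ ≤ ‖g x‖ ^ 2 := by
          apply pow_le_pow_left₀ (by positivity) hg3
  -- hence the comparison function is integrable on S
  have hint : IntegrableOn (fun x => K * ((x - 1/2)⁻¹) ^ 2) S volume := by
    refine Integrable.mono' hIS ?_ ?_
    · exact (((measurable_id.sub measurable_const).inv.pow measurable_const).const_mul
        K).aestronglyMeasurable
    · filter_upwards [hbound, ae_restrict_mem measurableSet_Ioo] with x hx hxS
      rw [Real.norm_eq_abs, abs_of_nonneg (by positivity)]
      exact hx
  -- but it is not: change of variables to x ↦ x⁻¹ ^ 2 on (0, δ)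
  have h1 : IntegrableOn (fun x => ((x - 1/2)⁻¹) ^ 2) S volume := by
    have h2 := hint.const_mul K⁻¹
    refine h2.congr (Filter.Eventually.of_forall fun x => ?_)
    simp only
    rw [← mul_assoc, inv_mul_cancel₀ hK.ne', one_mul]
  have h3 : IntervalIntegrable (fun x => ((x - 1/2)⁻¹) ^ 2) volume (1/2) (1/2 + δ) := by
    rw [intervalIntegrable_iff_integrableOn_Ioo_of_le (by linarith)]
    exact h1
  have h4 := h3.comp_add_right (1/2)
  simp only [add_sub_cancel_right, sub_self, add_sub_cancel_left] at h4
  rw [intervalIntegrable_iff_integrableOn_Ioo_of_le hδ.le] at h4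
  have h5 : IntegrableOn (fun x : ℝ => x ^ (-2:ℝ)) (Set.Ioo (0:ℝ) δ) volume := by
    refine h4.congr_fun (fun x hx => ?_) measurableSet_Ioo
    rw [Real.rpow_neg hx.1.le, Real.rpow_two]
    exact inv_pow x 2
  rw [intervalIntegral.integrableOn_Ioo_rpow_iff hδ] at h5
  linarith
end

section
/- If unitary operators U₁ and U₂ on separable Hilbert spaces are quasi-similar (there exist bounded intertwining operators V : H₁ → H₂ and W : H₂ → H₁, both with dense range), then U₁ and U₂ are unitarily equivalent. -/
open ContinuousLinearMap
set_option maxHeartbeats 1000000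

/-- From a dense-range intertwiner `V` construct a co-isometry `p` (i.e. `p ∘ adjoint p = 1`)
intertwining the unitaries. -/
theorem coisometry_of_denseRange_intertwiner
    {H K : Type*} [NormedAddCommGroup H] [InnerProductSpace ℂ H] [CompleteSpace H]
    [NormedAddCommGroup K] [InnerProductSpace ℂ K] [CompleteSpace K]
    (u : H →L[ℂ] H) (w : K →L[ℂ] K)
    (hu : (adjoint u).comp u = 1) (hu' : u.comp (adjoint u) = 1)
    (hw : (adjoint w).comp w = 1) (hw' : w.comp (adjoint w) = 1)
    (V : H →L[ℂ] K) (hV : V.comp u = w.comp V) (hVdense : DenseRange V) :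
    ∃ p : H →L[ℂ] K, p.comp (adjoint p) = 1 ∧ p.comp u = w.comp p := by
  classical
  set a : H →L[ℂ] H := (adjoint V).comp V with ha_def
  have ha : 0 ≤ a := by
    rw [nonneg_iff_isPositive]
    simpa using! (isPositive_one (E := K)).adjoint_conj V
  -- the square root of a
  set s : H →L[ℂ] H := cfc Real.sqrt a with hs_def
  have hssa : IsSelfAdjoint s := cfc_predicate _ a
  have hs2 : s * s = a := by
    rw [hs_def, ← cfc_mul ..]
    have h1 : ∀ x ∈ spectrum ℝ a, Real.sqrt x * Real.sqrt x = x := fun x hx =>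
      Real.mul_self_sqrt (spectrum_nonneg_of_nonneg ha hx)
    rw [cfc_congr h1, cfc_id' ℝ a]
  -- norms
  have hnorm : ∀ x, ‖s x‖ = ‖V x‖ := by
    intro x
    have h1 : (inner ℂ (s x) (s x) : ℂ) = inner ℂ (a x) x := by
      rw [← adjoint_inner_left s, hssa.adjoint_eq]
      rw [← comp_apply, ← mul_def, hs2]
    have h2 : (inner ℂ (V x) (V x) : ℂ) = inner ℂ (a x) x := by
      rw [ha_def, comp_apply, adjoint_inner_left]
    have := h1.trans h2.symm
    have h3 := congrArg (RCLike.re (K := ℂ)) this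
    rw [norm_eq_sqrt_re_inner (𝕜 := ℂ) (s x), norm_eq_sqrt_re_inner (𝕜 := ℂ) (V x)]
    exact congrArg Real.sqrt h3
  -- pointwise versions of the unitarity assumptions
  have huP : ∀ z, u (adjoint u z) = z := fun z => by
    have := congrArg (fun T : H →L[ℂ] H => T z) hu'; simpa using this
  have huP' : ∀ z, adjoint u (u z) = z := fun z => by
    have := congrArg (fun T : H →L[ℂ] H => T z) hu; simpa using this
  have hwP : ∀ z, w (adjoint w z) = z := fun z => by
    have := congrArg (fun T : K →L[ℂ] K => T z) hw'; simpa using this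
  have hwP' : ∀ z, adjoint w (w z) = z := fun z => by
    have := congrArg (fun T : K →L[ℂ] K => T z) hw; simpa using this
  have hVP : ∀ x, V (u x) = w (V x) := fun x => by
    have := congrArg (fun T : H →L[ℂ] K => T x) hV; simpa using this
  -- adjoint intertwining
  have h0 : (adjoint u).comp (adjoint V) = (adjoint V).comp (adjoint w) := by
    have := congrArg adjoint hV; rwa [adjoint_comp, adjoint_comp] at this
  have h0P : ∀ z, adjoint u (adjoint V z) = adjoint V (adjoint w z) := fun z => by
    have := congrArg (fun T : K →L[ℂ] H => T z) h0; simpa using this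
  have hVadjP : ∀ y, adjoint V (w y) = u (adjoint V y) := by
    intro y
    calc adjoint V (w y) = u (adjoint u (adjoint V (w y))) := (huP _).symm
      _ = u (adjoint V (adjoint w (w y))) := by rw [h0P]
      _ = u (adjoint V y) := by rw [hwP']
  have hau : a.comp u = u.comp a := by
    ext x
    simp only [ha_def, comp_apply]
    rw [hVP, hVadjP]
  -- conjugation by `u` is a continuous star algebra homomorphism
  have humul : adjoint u * u = 1 := hu
  have humul' : u * adjoint u = 1 := hu'
  have humulz : ∀ z : H →L[ℂ] H, adjoint u * (u * z) = z := fun z => by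
    rw [← mul_assoc, humul, one_mul]
  let φ : (H →L[ℂ] H) →⋆ₐ[ℂ] (H →L[ℂ] H) :=
  { toFun := fun x => u * x * adjoint u
    map_one' := by show u * 1 * adjoint u = 1; rw [mul_one, humul']
    map_mul' := fun x y => by
      show u * (x * y) * adjoint u = (u * x * adjoint u) * (u * y * adjoint u)
      simp only [mul_assoc, humulz]
    map_zero' := by show u * 0 * adjoint u = 0; rw [mul_zero, zero_mul]
    map_add' := fun x y => by
      show u * (x + y) * adjoint u = u * x * adjoint u + u * y * adjoint u
      rw [mul_add, add_mul]
    commutes' := fun c => by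
      show u * algebraMap ℂ (H →L[ℂ] H) c * adjoint u = algebraMap ℂ (H →L[ℂ] H) c
      simp only [Algebra.algebraMap_eq_smul_one]
      rw [mul_smul_comm, mul_one, smul_mul_assoc, humul']
    map_star' := fun x => by
      show u * star x * adjoint u = star (u * x * adjoint u)
      simp only [star_mul, star_eq_adjoint, adjoint_adjoint, mul_assoc] }
  have hφcont : Continuous φ := by
    show Continuous fun x : H →L[ℂ] H => u * x * adjoint u
    fun_prop
  have hφa : φ a = a := by
    show u * a * adjoint u = a
    have : u * a = a * u := by
      ext x
      have := congrArg (fun T : H →L[ℂ] H => T x) hau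
      simpa only [ContinuousLinearMap.mul_apply, comp_apply] using this.symm
    rw [this, mul_assoc, humul', mul_one]
  have hasa : IsSelfAdjoint a := ((nonneg_iff_isPositive a).mp ha).isSelfAdjoint
  have hφs : φ s = s := by
    have := StarAlgHomClass.map_cfc φ Real.sqrt a (hφ := hφcont)
    rw [hφa] at this
    rw [hs_def, this]
  have hsu : s.comp u = u.comp s := by
    have : u * s * adjoint u = s := hφs
    have h2 : u * s * adjoint u * u = s * u := by rw [this]
    rw [mul_assoc (u * s), humul, mul_one] at h2
    ext x
    have := congrArg (fun T : H →L[ℂ] H => T x) h2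
    simpa only [ContinuousLinearMap.mul_apply, comp_apply] using this.symm
  have hsuP : ∀ x, s (u x) = u (s x) := fun x => by
    have := congrArg (fun T : H →L[ℂ] H => T x) hsu; simpa using this
  -- `s` identifies points with equal `V`-image
  have hskerV : ∀ x y : H, V x = V y → s x = s y := by
    intro x y hxy
    have : ‖s x - s y‖ = 0 := by
      rw [← map_sub, hnorm, map_sub, hxy, sub_self, norm_zero]
    rwa [norm_eq_zero, sub_eq_zero] at this
  -- the dense submodule `R = range V`
  set R : Submodule ℂ K := LinearMap.range (V : H →ₗ[ℂ] K) with hR_def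
  have hRdense : Dense (R : Set K) := by
    have : (R : Set K) = Set.range V := by
      ext y; simp [hR_def, LinearMap.mem_range]
    rwa [this]
  -- a linear right inverse of `V` onto its range
  obtain ⟨σ, hσ⟩ := (V : H →ₗ[ℂ] K).rangeRestrict.exists_rightInverse_of_surjective
    (LinearMap.range_rangeRestrict _)
  have hσP : ∀ y : R, V (σ y) = (y : K) := by
    intro y
    have h1 := congrArg (fun T : (↥(LinearMap.range (V : H →ₗ[ℂ] K))) →ₗ[ℂ] (↥(LinearMap.range (V : H →ₗ[ℂ] K))) => T y) hσ
    exact congrArg Subtype.val h1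
  -- the contraction `r : K →L[ℂ] H`, defined first on `R` by `V x ↦ s x`
  let g₀l : R →ₗ[ℂ] H := (s : H →ₗ[ℂ] H) ∘ₗ σ
  have hg₀ : ∀ y : R, ‖g₀l y‖ = ‖y‖ := by
    intro y
    show ‖s (σ y)‖ = ‖y‖
    rw [hnorm, hσP]
    rfl
  let g₀ : R →L[ℂ] H := g₀l.mkContinuous 1 (fun y => by rw [hg₀, one_mul])
  have h_e : IsUniformInducing (R.subtypeL : R →L[ℂ] K) := by
    show IsUniformInducing (Subtype.val : R → K)
    exact isometry_subtype_coe.isUniformInducing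
  have h_dense : DenseRange (R.subtypeL : R →L[ℂ] K) := by
    show Dense (Set.range (Subtype.val : R → K))
    rwa [Subtype.range_coe]
  let r : K →L[ℂ] H := g₀.extend R.subtypeL
  have hrV : ∀ x : H, r (V x) = s x := by
    intro x
    have hmem : V x ∈ R := LinearMap.mem_range_self _ x
    have h1 : r (V x) = g₀ ⟨V x, hmem⟩ := by
      have := ContinuousLinearMap.extend_eq g₀ (e := R.subtypeL) h_dense h_e ⟨V x, hmem⟩
      simpa using this
    rw [h1]
    show s (σ ⟨V x, hmem⟩) = s x
    exact hskerV _ _ (by rw [hσP])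
  have hrcont : Continuous r := r.continuous
  -- the candidate co-isometry
  have key : ∀ x : H, adjoint r (r (V x)) = V x := by
    intro x
    have heq : (fun y : K => (inner ℂ (adjoint r (r (V x))) y : ℂ))
        = fun y => (inner ℂ (V x) y : ℂ) := by
      refine hVdense.equalizer (continuous_const.inner continuous_id)
        (continuous_const.inner continuous_id) ?_
      funext y'
      show (inner ℂ (adjoint r (r (V x))) (V y') : ℂ) = inner ℂ (V x) (V y')
      rw [adjoint_inner_left, hrV, hrV]
      have h1 : (inner ℂ (s x) (s y') : ℂ) = inner ℂ (a x) y' := by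
        rw [← adjoint_inner_left s, hssa.adjoint_eq, ← comp_apply, ← mul_def, hs2]
      have h2 : (inner ℂ (V x) (V y') : ℂ) = inner ℂ (a x) y' := by
        rw [ha_def, comp_apply, adjoint_inner_left]
      rw [h1, h2]
    exact ext_inner_right ℂ (fun v => congrFun heq v)
  refine ⟨adjoint r, ?_, ?_⟩
  · rw [adjoint_adjoint]
    have hfun : (fun z : K => adjoint r (r z)) = fun z => z :=
      hVdense.equalizer ((adjoint r).continuous.comp r.continuous) continuous_id
        (funext fun x => key x)
    ext z
    exact congrFun hfun z
  · have hrw : r.comp w = u.comp r := by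
      have hfun : (fun z : K => r (w z)) = fun z => u (r z) := by
        refine hVdense.equalizer (r.continuous.comp w.continuous)
          (u.continuous.comp r.continuous) ?_
        funext x
        show r (w (V x)) = u (r (V x))
        rw [← hVP, hrV, hrV, hsuP]
      ext z
      exact congrFun hfun z
    have hX : (adjoint w).comp (adjoint r) = (adjoint r).comp (adjoint u) := by
      have := congrArg adjoint hrw
      rwa [adjoint_comp, adjoint_comp] at this
    have hXP : ∀ z : H, adjoint w (adjoint r z) = adjoint r (adjoint u z) := fun z => by
      have := congrArg (fun T : H →L[ℂ] K => T z) hX; simpa using this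
    ext x
    show adjoint r (u x) = w (adjoint r x)
    calc adjoint r (u x) = w (adjoint w (adjoint r (u x))) := (hwP _).symm
      _ = w (adjoint r (adjoint u (u x))) := by rw [hXP]
      _ = w (adjoint r x) := by rw [huP']


/-- Schröder–Bernstein style argument: two intertwining co-isometries in opposite
directions between unitaries yield a unitary intertwiner. -/
theorem unitary_equiv_of_coisometries
    {H₁ H₂ : Type*}
    [NormedAddCommGroup H₁] [InnerProductSpace ℂ H₁] [CompleteSpace H₁]
    [NormedAddCommGroup H₂] [InnerProductSpace ℂ H₂] [CompleteSpace H₂]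
    (u₁ : H₁ →L[ℂ] H₁) (u₂ : H₂ →L[ℂ] H₂)
    (hu₁ : (adjoint u₁).comp u₁ = 1) (hu₁' : u₁.comp (adjoint u₁) = 1)
    (hu₂ : (adjoint u₂).comp u₂ = 1) (hu₂' : u₂.comp (adjoint u₂) = 1)
    (p : H₁ →L[ℂ] H₂) (hp1 : p.comp (adjoint p) = 1) (hp2 : p.comp u₁ = u₂.comp p)
    (q : H₂ →L[ℂ] H₁) (hq1 : q.comp (adjoint q) = 1) (hq2 : q.comp u₂ = u₁.comp q) :
    ∃ S : H₁ ≃ₗᵢ[ℂ] H₂, ∀ x, S (u₁ x) = u₂ (S x) := by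
  classical
  set φ : H₁ →L[ℂ] H₁ := (adjoint p).comp (adjoint q) with hφ_def
  set e : H₁ →L[ℂ] H₁ := (adjoint p).comp p with he_def
  -- pointwise versions
  have hp1P : ∀ z, p (adjoint p z) = z := fun z => by
    have := congrArg (fun T : H₂ →L[ℂ] H₂ => T z) hp1; simpa using this
  have hq1P : ∀ z, q (adjoint q z) = z := fun z => by
    have := congrArg (fun T : H₁ →L[ℂ] H₁ => T z) hq1; simpa using this
  have hu₁P : ∀ z, u₁ (adjoint u₁ z) = z := fun z => by
    have := congrArg (fun T : H₁ →L[ℂ] H₁ => T z) hu₁'; simpa using this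
  have hu₁P' : ∀ z, adjoint u₁ (u₁ z) = z := fun z => by
    have := congrArg (fun T : H₁ →L[ℂ] H₁ => T z) hu₁; simpa using this
  have hu₂P : ∀ z, u₂ (adjoint u₂ z) = z := fun z => by
    have := congrArg (fun T : H₂ →L[ℂ] H₂ => T z) hu₂'; simpa using this
  have hu₂P' : ∀ z, adjoint u₂ (u₂ z) = z := fun z => by
    have := congrArg (fun T : H₂ →L[ℂ] H₂ => T z) hu₂; simpa using this
  have hp2P : ∀ x, p (u₁ x) = u₂ (p x) := fun x => by
    have := congrArg (fun T : H₁ →L[ℂ] H₂ => T x) hp2; simpa using this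
  have hq2P : ∀ x, q (u₂ x) = u₁ (q x) := fun x => by
    have := congrArg (fun T : H₂ →L[ℂ] H₁ => T x) hq2; simpa using this
  -- adjoint intertwining, pointwise
  have hpadj : ∀ z, adjoint p (u₂ z) = u₁ (adjoint p z) := by
    have h0 : (adjoint u₁).comp (adjoint p) = (adjoint p).comp (adjoint u₂) := by
      have := congrArg adjoint hp2; rwa [adjoint_comp, adjoint_comp] at this
    have h0P : ∀ z, adjoint u₁ (adjoint p z) = adjoint p (adjoint u₂ z) := fun z => by
      have := congrArg (fun T : H₂ →L[ℂ] H₁ => T z) h0; simpa using this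
    intro z
    calc adjoint p (u₂ z) = u₁ (adjoint u₁ (adjoint p (u₂ z))) := (hu₁P _).symm
      _ = u₁ (adjoint p (adjoint u₂ (u₂ z))) := by rw [h0P]
      _ = u₁ (adjoint p z) := by rw [hu₂P']
  have hqadj : ∀ z, adjoint q (u₁ z) = u₂ (adjoint q z) := by
    have h0 : (adjoint u₂).comp (adjoint q) = (adjoint q).comp (adjoint u₁) := by
      have := congrArg adjoint hq2; rwa [adjoint_comp, adjoint_comp] at this
    have h0P : ∀ z, adjoint u₂ (adjoint q z) = adjoint q (adjoint u₁ z) := fun z => by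
      have := congrArg (fun T : H₁ →L[ℂ] H₂ => T z) h0; simpa using this
    intro z
    calc adjoint q (u₁ z) = u₂ (adjoint u₂ (adjoint q (u₁ z))) := (hu₂P _).symm
      _ = u₂ (adjoint q (adjoint u₁ (u₁ z))) := by rw [h0P]
      _ = u₂ (adjoint q z) := by rw [hu₁P']
  -- basic facts about e and φ
  have he_sa : IsSelfAdjoint e := by
    rw [IsSelfAdjoint, star_eq_adjoint, he_def, adjoint_comp, adjoint_adjoint]
  have he1_sa : IsSelfAdjoint ((1 : H₁ →L[ℂ] H₁) - e) := by
    exact (IsSelfAdjoint.one (R := H₁ →L[ℂ] H₁)).sub he_sa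
  have heφ : ∀ x, e (φ x) = φ x := fun x => by
    show adjoint p (p (adjoint p (adjoint q x))) = adjoint p (adjoint q x)
    rw [hp1P]
  have heu : ∀ x, e (u₁ x) = u₁ (e x) := fun x => by
    show adjoint p (p (u₁ x)) = u₁ (adjoint p (p x))
    rw [hp2P, hpadj]
  have heu' : ∀ x, e (adjoint u₁ x) = adjoint u₁ (e x) := fun x => by
    calc e (adjoint u₁ x) = adjoint u₁ (u₁ (e (adjoint u₁ x))) := (hu₁P' _).symm
      _ = adjoint u₁ (e (u₁ (adjoint u₁ x))) := by rw [heu]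
      _ = adjoint u₁ (e x) := by rw [hu₁P]
  have hφu : ∀ x, φ (u₁ x) = u₁ (φ x) := fun x => by
    show adjoint p (adjoint q (u₁ x)) = u₁ (adjoint p (adjoint q x))
    rw [hqadj, hpadj]
  have hφu' : ∀ x, φ (adjoint u₁ x) = adjoint u₁ (φ x) := fun x => by
    calc φ (adjoint u₁ x) = adjoint u₁ (u₁ (φ (adjoint u₁ x))) := (hu₁P' _).symm
      _ = adjoint u₁ (φ (u₁ (adjoint u₁ x))) := by rw [hφu]
      _ = adjoint u₁ (φ x) := by rw [hu₁P]
  have hpiso : ∀ z, ‖adjoint p z‖ = ‖z‖ := by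
    intro z
    have h1 : (inner ℂ (adjoint p z) (adjoint p z) : ℂ) = inner ℂ z z := by
      rw [adjoint_inner_left, hp1P]
    rw [norm_eq_sqrt_re_inner (𝕜 := ℂ) (adjoint p z), norm_eq_sqrt_re_inner (𝕜 := ℂ) z, h1]
  have hqiso : ∀ z, ‖adjoint q z‖ = ‖z‖ := by
    intro z
    have h1 : (inner ℂ (adjoint q z) (adjoint q z) : ℂ) = inner ℂ z z := by
      rw [adjoint_inner_left, hq1P]
    rw [norm_eq_sqrt_re_inner (𝕜 := ℂ) (adjoint q z), norm_eq_sqrt_re_inner (𝕜 := ℂ) z, h1]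
  have hφiso : ∀ x, ‖φ x‖ = ‖x‖ := fun x => by
    show ‖adjoint p (adjoint q x)‖ = ‖x‖
    rw [hpiso, hqiso]
  -- the subspace G
  set gen : ℕ → Submodule ℂ H₁ :=
    fun k => LinearMap.range (((φ ^ k).comp (1 - e) : H₁ →L[ℂ] H₁) : H₁ →ₗ[ℂ] H₁) with hgen_def
  set G : Submodule ℂ H₁ := (⨆ k, gen k).topologicalClosure with hG_def
  have hGclosed : IsClosed (G : Set H₁) := Submodule.isClosed_topologicalClosure _
  have hgen_le : ∀ k, gen k ≤ G := fun k =>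
    le_trans (le_iSup gen k) (Submodule.le_topologicalClosure _)
  have hgen_mem : ∀ k y, (φ ^ k) ((1 - e) y) ∈ G := fun k y =>
    hgen_le k ⟨y, rfl⟩
  -- operators mapping G to G
  have hmapG : ∀ T : H₁ →L[ℂ] H₁, (∀ k y, T ((φ ^ k) ((1 - e) y)) ∈ G) →
      ∀ g ∈ G, T g ∈ G := by
    intro T hT g hg
    have hZc : IsClosed ((Submodule.comap (T : H₁ →ₗ[ℂ] H₁) G : Submodule ℂ H₁) : Set H₁) := by
      have : ((Submodule.comap (T : H₁ →ₗ[ℂ] H₁) G : Submodule ℂ H₁) : Set H₁)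
          = (⇑T) ⁻¹' (G : Set H₁) := rfl
      rw [this]
      exact hGclosed.preimage T.continuous
    have hcomap : G ≤ Submodule.comap (T : H₁ →ₗ[ℂ] H₁) G := by
      refine Submodule.topologicalClosure_minimal _ ?_ hZc
      refine iSup_le fun k => ?_
      rintro x ⟨y, rfl⟩
      exact hT k y
    exact hcomap hg
  have hφpow_comm : ∀ (T : H₁ →L[ℂ] H₁), (∀ x, T (φ x) = φ (T x)) →
      ∀ k x, T ((φ ^ k) x) = (φ ^ k) (T x) := by
    intro T hT k
    induction k with
    | zero => intro x; simp
    | succ n ih =>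
      intro x
      have h1 : (φ ^ (n + 1)) x = φ ((φ ^ n) x) := by
        rw [pow_succ']; rfl
      have h2 : (φ ^ (n + 1)) (T x) = φ ((φ ^ n) (T x)) := by
        rw [pow_succ']; rfl
      rw [h1, h2, hT, ih]
  have hφG : ∀ g ∈ G, φ g ∈ G := by
    refine hmapG φ fun k y => ?_
    have : φ ((φ ^ k) ((1 - e) y)) = (φ ^ (k + 1)) ((1 - e) y) := by
      rw [pow_succ']; rfl
    rw [this]; exact hgen_mem _ _
  have hu₁G : ∀ g ∈ G, u₁ g ∈ G := by
    refine hmapG u₁ fun k y => ?_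
    have h1 : u₁ ((1 - e) y) = (1 - e) (u₁ y) := by
      simp only [sub_apply, ContinuousLinearMap.one_apply, heu, map_sub]
    have h2 : u₁ ((φ ^ k) ((1 - e) y)) = (φ ^ k) ((1 - e) (u₁ y)) := by
      rw [hφpow_comm u₁ (fun x => (hφu x).symm) k, h1]
    rw [h2]; exact hgen_mem _ _
  have hu₁G' : ∀ g ∈ G, adjoint u₁ g ∈ G := by
    refine hmapG (adjoint u₁) fun k y => ?_
    have h1 : adjoint u₁ ((1 - e) y) = (1 - e) (adjoint u₁ y) := by
      simp only [sub_apply, ContinuousLinearMap.one_apply, heu', map_sub]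
    have h2 : adjoint u₁ ((φ ^ k) ((1 - e) y)) = (φ ^ k) ((1 - e) (adjoint u₁ y)) := by
      rw [hφpow_comm (adjoint u₁) (fun x => (hφu' x).symm) k, h1]
    rw [h2]; exact hgen_mem _ _
  -- the orthogonal projection onto G
  haveI : CompleteSpace G := hGclosed.completeSpace_coe
  set F : H₁ →L[ℂ] H₁ := G.subtypeL.comp G.orthogonalProjectionOnto with hF_def
  have hF_mem : ∀ x, F x ∈ G := fun x => (G.orthogonalProjectionOnto x).2
  have hF_inner : ∀ x, ∀ g ∈ G, (inner ℂ (x - F x) g : ℂ) = 0 := by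
    intro x g hg
    have h1 := Submodule.sub_starProjection_mem_orthogonal (K := G) x
    exact (Submodule.mem_orthogonal' G _).mp h1 g hg
  have hF_id : ∀ g ∈ G, F g = g := by
    intro g hg
    show G.subtypeL (G.orthogonalProjectionOnto g) = g
    have : G.orthogonalProjectionOnto ((⟨g, hg⟩ : G) : H₁) = ⟨g, hg⟩ :=
      Submodule.orthogonalProjectionOnto_mem_subspace_eq_self (⟨g, hg⟩ : G)
    rw [this]; rfl
  have hF_sa : IsSelfAdjoint F := isSelfAdjoint_starProjection G
  have hF_orth_zero : ∀ x, x ∈ Gᗮ → F x = 0 := by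
    intro x hx
    show G.subtypeL (G.orthogonalProjectionOnto x) = 0
    rw [Submodule.orthogonalProjectionOnto_apply_of_mem_orthogonal hx]
    rfl
  -- self-adjoint inner flip
  have hsa_inner : ∀ T : H₁ →L[ℂ] H₁, IsSelfAdjoint T →
      ∀ x y, (inner ℂ (T x) y : ℂ) = inner ℂ x (T y) := by
    intro T hT x y
    conv_lhs => rw [← hT.adjoint_eq]
    rw [adjoint_inner_left]
  -- Gᗮ is contained in the range of e
  have horth_e : ∀ z, (∀ g ∈ G, (inner ℂ g z : ℂ) = 0) → e z = z := by
    intro z hz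
    have hzero : ∀ v, (inner ℂ ((1 - e) z) v : ℂ) = 0 := by
      intro v
      rw [hsa_inner _ he1_sa z v, ← inner_conj_symm]
      have hmem : (1 - e) v ∈ G := by
        have h0 : ((φ ^ 0) ((1 - e) v)) = (1 - e) v := by simp
        have := hgen_mem 0 v; rwa [h0] at this
      rw [hz _ hmem]; simp
    have h0 : (1 - e) z = 0 := by
      refine ext_inner_right ℂ fun v => ?_
      rw [hzero v, inner_zero_left]
    have h1 : z - e z = 0 := by
      have : (1 - e) z = z - e z := by simp [sub_apply]
      rwa [this] at h0
    have := sub_eq_zero.mp h1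
    exact this.symm
  -- the isometry Ψ
  set Ψ : H₁ →L[ℂ] H₁ := (1 - F) + φ.comp F with hΨ_def
  have hΨP : ∀ x, Ψ x = (x - F x) + φ (F x) := fun x => by
    simp [hΨ_def, add_apply, sub_apply, comp_apply]
  have hΨnorm : ∀ x, ‖Ψ x‖ = ‖x‖ := by
    intro x
    have hAB : (inner ℂ (x - F x) (φ (F x)) : ℂ) = 0 :=
      hF_inner x _ (hφG _ (hF_mem x))
    have hFA : (inner ℂ (F x) (x - F x) : ℂ) = 0 := by
      rw [← inner_conj_symm, hF_inner x _ (hF_mem x)]; simp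
    have h1 : ‖Ψ x‖ ^ 2 = ‖x - F x‖ ^ 2 + ‖F x‖ ^ 2 := by
      rw [hΨP, norm_add_sq (𝕜 := ℂ)]
      have h5 : RCLike.re (inner ℂ (x - F x) (φ (F x)) : ℂ) = 0 := by rw [hAB]; simp
      rw [h5, hφiso]
      ring
    have h2 : ‖x‖ ^ 2 = ‖F x‖ ^ 2 + ‖x - F x‖ ^ 2 := by
      have hx : x = F x + (x - F x) := by abel
      conv_lhs => rw [hx]
      rw [norm_add_sq (𝕜 := ℂ)]
      have h5 : RCLike.re (inner ℂ (F x) (x - F x) : ℂ) = 0 := by rw [hFA]; simp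
      rw [h5]; ring
    have h3 : ‖Ψ x‖ ^ 2 = ‖x‖ ^ 2 := by rw [h1, h2]; ring
    nlinarith [norm_nonneg (Ψ x), norm_nonneg x]
  -- Ψ maps into the range of e
  have heΨ : ∀ x, e (Ψ x) = Ψ x := by
    intro x
    rw [hΨP, map_add]
    have hA : e (x - F x) = x - F x := by
      refine horth_e _ fun g hg => ?_
      rw [← inner_conj_symm, hF_inner x g hg]; simp
    rw [hA, heφ]
  have hpnorm : ∀ z, e z = z → ‖p z‖ = ‖z‖ := by
    intro z hz
    have h1 : (inner ℂ (p z) (p z) : ℂ) = inner ℂ z z := by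
      have h2 : (inner ℂ (e z) z : ℂ) = inner ℂ (p z) (p z) := by
        show (inner ℂ (adjoint p (p z)) z : ℂ) = inner ℂ (p z) (p z)
        rw [adjoint_inner_left]
      rw [← h2, hz]
    rw [norm_eq_sqrt_re_inner (𝕜 := ℂ) (p z), norm_eq_sqrt_re_inner (𝕜 := ℂ) z, h1]
  set S₀ : H₁ →L[ℂ] H₂ := p.comp Ψ with hS₀_def
  have hS₀norm : ∀ x, ‖S₀ x‖ = ‖x‖ := fun x => by
    rw [hS₀_def, comp_apply, hpnorm _ (heΨ x), hΨnorm]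
  set Sli : H₁ →ₗᵢ[ℂ] H₂ := ⟨(S₀ : H₁ →ₗ[ℂ] H₂), hS₀norm⟩ with hSli_def
  have hSli_apply : ∀ x, Sli x = S₀ x := fun x => rfl
  -- surjectivity of S₀
  set Rng : Submodule ℂ H₂ := LinearMap.range (S₀ : H₁ →ₗ[ℂ] H₂) with hRng_def
  have hRng_closed : IsClosed (Rng : Set H₂) := by
    have h1 : (Rng : Set H₂) = Set.range Sli := by
      ext y
      simp only [hRng_def, SetLike.mem_coe, LinearMap.mem_range, Set.mem_range]
      exact ⟨fun ⟨x, hx⟩ => ⟨x, hx⟩, fun ⟨x, hx⟩ => ⟨x, hx⟩⟩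
    rw [h1]
    exact Sli.isometry.isClosedEmbedding.isClosed_range
  haveI : CompleteSpace Rng := hRng_closed.completeSpace_coe
  have hbot : Rngᗮ = ⊥ := by
    rw [Submodule.eq_bot_iff]
    intro z hz
    have hz' : ∀ x, (inner ℂ (S₀ x) z : ℂ) = 0 := fun x =>
      (Submodule.mem_orthogonal Rng z).mp hz _ ⟨x, rfl⟩
    set wv : H₁ := adjoint p z with hwv_def
    have hwv_e : e wv = wv := by
      show adjoint p (p (adjoint p z)) = adjoint p z
      rw [hp1P]
    -- wv is orthogonal to (1-F) of anything
    have h1 : ∀ y, (inner ℂ ((1 : H₁ →L[ℂ] H₁) y - F y) wv : ℂ) = 0 := by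
      intro y
      have hmemo : y - F y ∈ Gᗮ := Submodule.sub_starProjection_mem_orthogonal (K := G) y
      have hFA : F (y - F y) = 0 := hF_orth_zero _ hmemo
      have hΨA : Ψ (y - F y) = y - F y := by
        rw [hΨP, hFA]
        simp
      have hx := hz' (y - F y)
      rw [hS₀_def, comp_apply, hΨA] at hx
      show (inner ℂ (y - F y) wv : ℂ) = 0
      rw [hwv_def, adjoint_inner_right]
      exact hx
    -- wv lies in G
    have hwvG : wv ∈ G := by
      have hzero : ∀ v, (inner ℂ ((1 - F) wv) v : ℂ) = 0 := by
        intro v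
        have hsa1F : IsSelfAdjoint ((1 : H₁ →L[ℂ] H₁) - F) :=
          (IsSelfAdjoint.one (R := H₁ →L[ℂ] H₁)).sub hF_sa
        rw [hsa_inner _ hsa1F wv v, ← inner_conj_symm]
        have h2 : ((1 : H₁ →L[ℂ] H₁) - F) v = (1 : H₁ →L[ℂ] H₁) v - F v := by
          simp [sub_apply]
        rw [h2, h1 v]
        simp
      have h0 : ((1 : H₁ →L[ℂ] H₁) - F) wv = 0 :=
        ext_inner_right ℂ fun v => by rw [hzero v, inner_zero_left]
      have h1' : wv - F wv = 0 := by
        have h2 : ((1 : H₁ →L[ℂ] H₁) - F) wv = wv - F wv := by simp [sub_apply]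
        rwa [h2] at h0
      have := sub_eq_zero.mp h1'
      rw [this]
      exact hF_mem wv
    -- wv is orthogonal to φ(G)
    have h2 : ∀ g ∈ G, (inner ℂ (φ g) wv : ℂ) = 0 := by
      intro g hg
      have hΨg : Ψ g = φ g := by
        rw [hΨP, hF_id g hg]
        simp
      have hx := hz' g
      rw [hS₀_def, comp_apply, hΨg] at hx
      rw [hwv_def, adjoint_inner_right]
      exact hx
    -- wv is orthogonal to all generators, hence to G
    have h3 : ∀ g ∈ G, (inner ℂ g wv : ℂ) = 0 := by
      have hgen0 : ∀ k y, (inner ℂ ((φ ^ k) ((1 - e) y)) wv : ℂ) = 0 := by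
        intro k y
        cases k with
        | zero =>
          have h4 : ((φ ^ 0) ((1 - e) y)) = (1 - e) y := by simp
          rw [h4, hsa_inner _ he1_sa y wv]
          have h5 : ((1 : H₁ →L[ℂ] H₁) - e) wv = 0 := by
            have h6 : ((1 : H₁ →L[ℂ] H₁) - e) wv = wv - e wv := by simp [sub_apply]
            rw [h6, hwv_e, sub_self]
          rw [h5, inner_zero_right]
        | succ n =>
          have h4 : ((φ ^ (n+1)) ((1 - e) y)) = φ ((φ ^ n) ((1 - e) y)) := by
            rw [pow_succ']; rfl
          rw [h4]
          exact h2 _ (hgen_mem n y)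
      intro g hg
      -- via the closed submodule (ℂ ∙ wv)ᗮ
      have hZ : G ≤ (ℂ ∙ wv)ᗮ := by
        refine Submodule.topologicalClosure_minimal _ ?_ (Submodule.isClosed_orthogonal (ℂ ∙ wv))
        refine iSup_le fun k => ?_
        rintro x ⟨y, rfl⟩
        rw [Submodule.mem_orthogonal_singleton_iff_inner_left]
        exact hgen0 k y
      have := hZ hg
      rwa [Submodule.mem_orthogonal_singleton_iff_inner_left] at this
    have hwv0 : wv = 0 := by
      have := h3 wv hwvG
      rwa [inner_self_eq_zero] at this
    have : z = p wv := by rw [hwv_def, hp1P]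
    rw [this, hwv0, map_zero]
  have hRng_top : Rng = ⊤ := Submodule.orthogonal_eq_bot_iff.mp hbot
  have hsurj : Function.Surjective Sli := by
    intro y
    have : y ∈ Rng := hRng_top ▸ Submodule.mem_top
    obtain ⟨x, hx⟩ := this
    exact ⟨x, hx⟩
  -- conclude
  refine ⟨LinearIsometryEquiv.ofSurjective Sli hsurj, fun x => ?_⟩
  have hcoe : ∀ y, (LinearIsometryEquiv.ofSurjective Sli hsurj) y = S₀ y := fun y => rfl
  rw [hcoe, hcoe]
  -- F commutes with u₁
  have hFu : ∀ y, F (u₁ y) = u₁ (F y) := by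
    intro y
    have hmem : u₁ (F y) ∈ G := hu₁G _ (hF_mem y)
    have hinner : ∀ g ∈ G, (inner ℂ (u₁ y - u₁ (F y)) g : ℂ) = 0 := by
      intro g hg
      have h4 : u₁ y - u₁ (F y) = u₁ (y - F y) := by rw [map_sub]
      rw [h4, ← adjoint_inner_right]
      exact hF_inner y _ (hu₁G' g hg)
    have := Submodule.eq_starProjection_of_mem_of_inner_eq_zero hmem hinner
    show G.starProjection (u₁ y) = u₁ (F y)
    rw [this]
  have hΨu : ∀ y, Ψ (u₁ y) = u₁ (Ψ y) := by
    intro y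
    rw [hΨP, hΨP, hFu, map_add, map_sub, hφu]
  rw [hS₀_def, comp_apply, comp_apply, hΨu, hp2P]



private lemma unitary_clm_facts {H : Type*} [NormedAddCommGroup H] [InnerProductSpace ℂ H]
    [CompleteSpace H] (U : H ≃ₗᵢ[ℂ] H) :
    (adjoint (U : H →L[ℂ] H)).comp (U : H →L[ℂ] H) = 1 ∧
      (U : H →L[ℂ] H).comp (adjoint (U : H →L[ℂ] H)) = 1 := by
  have hadj : adjoint (U : H →L[ℂ] H) = (U.symm : H →L[ℂ] H) := by
    ext y
    refine ext_inner_right ℂ (fun v => ?_)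
    rw [adjoint_inner_left]
    show (inner ℂ y (U v) : ℂ) = inner ℂ (U.symm y) v
    conv_rhs => rw [← LinearIsometryEquiv.inner_map_map U (U.symm y) v]
    rw [LinearIsometryEquiv.apply_symm_apply]
  constructor
  · ext x
    rw [comp_apply, hadj]
    show U.symm (U x) = x
    simp
  · ext x
    rw [comp_apply, hadj]
    show U (U.symm x) = x
    simp

/-- Quasi-similar unitary operators on separable Hilbert spaces are unitarily equivalent. -/
theorem unitary_quasiSimilar_implies_unitarilyEquivalent
    {H₁ H₂ : Type*}
    [NormedAddCommGroup H₁] [InnerProductSpace ℂ H₁] [CompleteSpace H₁]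
    [TopologicalSpace.SeparableSpace H₁]
    [NormedAddCommGroup H₂] [InnerProductSpace ℂ H₂] [CompleteSpace H₂]
    [TopologicalSpace.SeparableSpace H₂]
    (U₁ : H₁ ≃ₗᵢ[ℂ] H₁) (U₂ : H₂ ≃ₗᵢ[ℂ] H₂)
    (V : H₁ →L[ℂ] H₂) (hV : ∀ y, V (U₁ y) = U₂ (V y)) (hVdense : DenseRange V)
    (W : H₂ →L[ℂ] H₁) (hW : ∀ y, W (U₂ y) = U₁ (W y)) (hWdense : DenseRange W) :
    ∃ S : H₁ ≃ₗᵢ[ℂ] H₂, ∀ x, S (U₁ x) = U₂ (S x) := by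
  classical
  obtain ⟨hu₁, hu₁'⟩ := unitary_clm_facts U₁
  obtain ⟨hu₂, hu₂'⟩ := unitary_clm_facts U₂
  have hVc : V.comp (U₁ : H₁ →L[ℂ] H₁) = (U₂ : H₂ →L[ℂ] H₂).comp V := by
    ext x; exact hV x
  have hWc : W.comp (U₂ : H₂ →L[ℂ] H₂) = (U₁ : H₁ →L[ℂ] H₁).comp W := by
    ext x; exact hW x
  obtain ⟨p, hp1, hp2⟩ := coisometry_of_denseRange_intertwiner
    (U₁ : H₁ →L[ℂ] H₁) (U₂ : H₂ →L[ℂ] H₂) hu₁ hu₁' hu₂ hu₂' V hVc hVdense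
  obtain ⟨q, hq1, hq2⟩ := coisometry_of_denseRange_intertwiner
    (U₂ : H₂ →L[ℂ] H₂) (U₁ : H₁ →L[ℂ] H₁) hu₂ hu₂' hu₁ hu₁' W hWc hWdense
  obtain ⟨S, hS⟩ := unitary_equiv_of_coisometries
    (U₁ : H₁ →L[ℂ] H₁) (U₂ : H₂ →L[ℂ] H₂) hu₁ hu₁' hu₂ hu₂' p hp1 hp2 q hq1 hq2
  exact ⟨S, fun x => hS x⟩
end

section
/- Let (Yₙ, 𝒞ₙ, νₙ), n ≥ 1, be probability spaces and let A be a measurable subset of the infinite product ∏ₙ Yₙ such that the function 1_A − ν(A) decomposes as ∑ₙ fₙ(yₙ) with fₙ ∈ L²₀(Yₙ, νₙ) (zero-mean, depending only on the n-th coordinate, with the sum converging in L²). Then at most one fₙ is nonzero. -/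
open MeasureTheory ProbabilityTheory Filter

section Aux

variable {Y : ℕ → Type*} [∀ n, MeasurableSpace (Y n)]
    (μ : Measure (∀ n, Y n)) [IsProbabilityMeasure μ]
    (hindep : iIndepFun (fun n => fun ω : ∀ k, Y k => ω n) μ)

include hindep

private lemma prod_integral_aux'
    (u : ∀ k, Y k → ℝ) (hu : ∀ k, Measurable (u k))
    (hui : ∀ k, Integrable (fun ω : ∀ i, Y i => u k (ω k)) μ) (s : Finset ℕ) :
    Integrable (fun ω : ∀ i, Y i => ∏ k ∈ s, u k (ω k)) μ ∧
      ∫ ω, (∏ k ∈ s, u k (ω k)) ∂μ = ∏ k ∈ s, ∫ ω, u k (ω k) ∂μ := by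
  classical
  have hX : iIndepFun (fun k (ω : ∀ i, Y i) => u k (ω k)) μ :=
    hindep.comp u hu
  have hXm : ∀ k, Measurable (fun ω : ∀ i, Y i => u k (ω k)) :=
    fun k => (hu k).comp (measurable_pi_apply k)
  induction s using Finset.induction_on with
  | empty => simp
  | @insert a s ha ih =>
      have hIndep : IndepFun (fun ω : ∀ i, Y i => ∏ k ∈ s, u k (ω k))
          (fun ω : ∀ i, Y i => u a (ω a)) μ := by
        have h := hX.indepFun_finsetProd_of_notMem hXm ha
        have : (∏ j ∈ s, fun ω : ∀ i, Y i => u j (ω j)) =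
            fun ω : ∀ i, Y i => ∏ k ∈ s, u k (ω k) := by
          funext ω; simp
        rwa [this] at h
      constructor
      · have h2 := hIndep.symm.integrable_mul (hui a) ih.1
        have : ((fun ω : ∀ i, Y i => u a (ω a)) * fun ω : ∀ i, Y i => ∏ k ∈ s, u k (ω k)) =
            fun ω : ∀ i, Y i => ∏ k ∈ insert a s, u k (ω k) := by
          funext ω; simp [Finset.prod_insert ha]
        rwa [this] at h2
      · have h3 := hIndep.symm.integral_mul_eq_mul_integral ((hXm a).aestronglyMeasurable)
          (ih.1.aestronglyMeasurable)
        simp only [Finset.prod_insert ha]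
        rw [show (∫ ω, (u a (ω a) * ∏ k ∈ s, u k (ω k)) ∂μ)
            = (∫ ω, u a (ω a) ∂μ) * ∫ ω, (∏ k ∈ s, u k (ω k)) ∂μ from h3, ih.2]

private lemma prod_integral_two' {j k : ℕ} (hjk : j ≠ k)
    (v : Y j → ℝ) (w : Y k → ℝ) (hv : Measurable v) (hw : Measurable w)
    (hvi : Integrable (fun ω : ∀ i, Y i => v (ω j)) μ)
    (hwi : Integrable (fun ω : ∀ i, Y i => w (ω k)) μ) :
    Integrable (fun ω : ∀ i, Y i => v (ω j) * w (ω k)) μ ∧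
      ∫ ω, v (ω j) * w (ω k) ∂μ = (∫ ω, v (ω j) ∂μ) * ∫ ω, w (ω k) ∂μ := by
  classical
  set u : ∀ i, Y i → ℝ :=
    Function.update (Function.update (fun i (_ : Y i) => (1:ℝ)) j v) k w with hu_def
  have huj : u j = v := by
    rw [hu_def, Function.update_of_ne hjk, Function.update_self]
  have huk : u k = w := by rw [hu_def, Function.update_self]
  have huo : ∀ i, i ≠ j → i ≠ k → u i = fun _ => (1:ℝ) := by
    intro i hij hik
    rw [hu_def, Function.update_of_ne hik, Function.update_of_ne hij]
  have hu : ∀ i, Measurable (u i) := by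
    intro i
    rcases eq_or_ne i j with rfl | hij
    · rwa [huj]
    rcases eq_or_ne i k with rfl | hik
    · rwa [huk]
    · rw [huo i hij hik]; exact measurable_const
  have hui : ∀ i, Integrable (fun ω : ∀ i, Y i => u i (ω i)) μ := by
    intro i
    rcases eq_or_ne i j with rfl | hij
    · rwa [huj]
    rcases eq_or_ne i k with rfl | hik
    · rwa [huk]
    · rw [huo i hij hik]; exact integrable_const 1
  have h := prod_integral_aux' μ hindep u hu hui {j, k}
  have hprod : (fun ω : ∀ i, Y i => ∏ i ∈ ({j, k} : Finset ℕ), u i (ω i)) =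
      fun ω : ∀ i, Y i => v (ω j) * w (ω k) := by
    funext ω
    rw [Finset.prod_insert (by simpa using hjk), Finset.prod_singleton, huj, huk]
  have hprod2 : (∏ i ∈ ({j, k} : Finset ℕ), ∫ ω, u i (ω i) ∂μ) =
      (∫ ω, v (ω j) ∂μ) * ∫ ω, w (ω k) ∂μ := by
    rw [Finset.prod_insert (by simpa using hjk), Finset.prod_singleton, huj, huk]
  rw [hprod, hprod2] at h
  exact h

private lemma prod_integral_three' {j k l : ℕ} (hjk : j ≠ k) (hjl : j ≠ l) (hkl : k ≠ l)
    (v : Y j → ℝ) (w : Y k → ℝ) (x : Y l → ℝ)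
    (hv : Measurable v) (hw : Measurable w) (hx : Measurable x)
    (hvi : Integrable (fun ω : ∀ i, Y i => v (ω j)) μ)
    (hwi : Integrable (fun ω : ∀ i, Y i => w (ω k)) μ)
    (hxi : Integrable (fun ω : ∀ i, Y i => x (ω l)) μ) :
    Integrable (fun ω : ∀ i, Y i => v (ω j) * w (ω k) * x (ω l)) μ ∧
      ∫ ω, v (ω j) * w (ω k) * x (ω l) ∂μ =
        (∫ ω, v (ω j) ∂μ) * (∫ ω, w (ω k) ∂μ) * ∫ ω, x (ω l) ∂μ := by
  classical
  set u : ∀ i, Y i → ℝ :=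
    Function.update (Function.update (Function.update (fun i (_ : Y i) => (1:ℝ)) j v) k w) l x
    with hu_def
  have huj : u j = v := by
    rw [hu_def, Function.update_of_ne hjl, Function.update_of_ne hjk, Function.update_self]
  have huk : u k = w := by
    rw [hu_def, Function.update_of_ne hkl, Function.update_self]
  have hul : u l = x := by rw [hu_def, Function.update_self]
  have huo : ∀ i, i ≠ j → i ≠ k → i ≠ l → u i = fun _ => (1:ℝ) := by
    intro i hij hik hil
    rw [hu_def, Function.update_of_ne hil, Function.update_of_ne hik,
      Function.update_of_ne hij]
  have hu : ∀ i, Measurable (u i) := by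
    intro i
    rcases eq_or_ne i j with rfl | hij
    · rwa [huj]
    rcases eq_or_ne i k with rfl | hik
    · rwa [huk]
    rcases eq_or_ne i l with rfl | hil
    · rwa [hul]
    · rw [huo i hij hik hil]; exact measurable_const
  have hui : ∀ i, Integrable (fun ω : ∀ i, Y i => u i (ω i)) μ := by
    intro i
    rcases eq_or_ne i j with rfl | hij
    · rwa [huj]
    rcases eq_or_ne i k with rfl | hik
    · rwa [huk]
    rcases eq_or_ne i l with rfl | hil
    · rwa [hul]
    · rw [huo i hij hik hil]; exact integrable_const 1
  have h := prod_integral_aux' μ hindep u hu hui {j, k, l}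
  have hmem : j ∉ ({k, l} : Finset ℕ) := by simp [hjk, hjl]
  have hmem2 : k ∉ ({l} : Finset ℕ) := by simp [hkl]
  have hprod : (fun ω : ∀ i, Y i => ∏ i ∈ ({j, k, l} : Finset ℕ), u i (ω i)) =
      fun ω : ∀ i, Y i => v (ω j) * w (ω k) * x (ω l) := by
    funext ω
    rw [Finset.prod_insert hmem, Finset.prod_insert hmem2, Finset.prod_singleton,
      huj, huk, hul, mul_assoc]
  have hprod2 : (∏ i ∈ ({j, k, l} : Finset ℕ), ∫ ω, u i (ω i) ∂μ) =
      (∫ ω, v (ω j) ∂μ) * (∫ ω, w (ω k) ∂μ) * ∫ ω, x (ω l) ∂μ := by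
    rw [Finset.prod_insert hmem, Finset.prod_insert hmem2, Finset.prod_singleton,
      huj, huk, hul, mul_assoc]
  rw [hprod, hprod2] at h
  exact h

private lemma prod_integral_four' {j k l r : ℕ} (hjk : j ≠ k) (hjl : j ≠ l) (hjr : j ≠ r)
    (hkl : k ≠ l) (hkr : k ≠ r) (hlr : l ≠ r)
    (v : Y j → ℝ) (w : Y k → ℝ) (x : Y l → ℝ) (z : Y r → ℝ)
    (hv : Measurable v) (hw : Measurable w) (hx : Measurable x) (hz : Measurable z)
    (hvi : Integrable (fun ω : ∀ i, Y i => v (ω j)) μ)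
    (hwi : Integrable (fun ω : ∀ i, Y i => w (ω k)) μ)
    (hxi : Integrable (fun ω : ∀ i, Y i => x (ω l)) μ)
    (hzi : Integrable (fun ω : ∀ i, Y i => z (ω r)) μ) :
    Integrable (fun ω : ∀ i, Y i => v (ω j) * w (ω k) * x (ω l) * z (ω r)) μ ∧
      ∫ ω, v (ω j) * w (ω k) * x (ω l) * z (ω r) ∂μ =
        (∫ ω, v (ω j) ∂μ) * (∫ ω, w (ω k) ∂μ) * (∫ ω, x (ω l) ∂μ) * ∫ ω, z (ω r) ∂μ := by
  classical
  set u : ∀ i, Y i → ℝ :=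
    Function.update (Function.update (Function.update (Function.update
      (fun i (_ : Y i) => (1:ℝ)) j v) k w) l x) r z with hu_def
  have huj : u j = v := by
    rw [hu_def, Function.update_of_ne hjr, Function.update_of_ne hjl,
      Function.update_of_ne hjk, Function.update_self]
  have huk : u k = w := by
    rw [hu_def, Function.update_of_ne hkr, Function.update_of_ne hkl, Function.update_self]
  have hul : u l = x := by
    rw [hu_def, Function.update_of_ne hlr, Function.update_self]
  have hur : u r = z := by rw [hu_def, Function.update_self]
  have huo : ∀ i, i ≠ j → i ≠ k → i ≠ l → i ≠ r → u i = fun _ => (1:ℝ) := by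
    intro i hij hik hil hir
    rw [hu_def, Function.update_of_ne hir, Function.update_of_ne hil,
      Function.update_of_ne hik, Function.update_of_ne hij]
  have hu : ∀ i, Measurable (u i) := by
    intro i
    rcases eq_or_ne i j with rfl | hij
    · rwa [huj]
    rcases eq_or_ne i k with rfl | hik
    · rwa [huk]
    rcases eq_or_ne i l with rfl | hil
    · rwa [hul]
    rcases eq_or_ne i r with rfl | hir
    · rwa [hur]
    · rw [huo i hij hik hil hir]; exact measurable_const
  have hui : ∀ i, Integrable (fun ω : ∀ i, Y i => u i (ω i)) μ := by
    intro i
    rcases eq_or_ne i j with rfl | hij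
    · rwa [huj]
    rcases eq_or_ne i k with rfl | hik
    · rwa [huk]
    rcases eq_or_ne i l with rfl | hil
    · rwa [hul]
    rcases eq_or_ne i r with rfl | hir
    · rwa [hur]
    · rw [huo i hij hik hil hir]; exact integrable_const 1
  have h := prod_integral_aux' μ hindep u hu hui {j, k, l, r}
  have hmem : j ∉ ({k, l, r} : Finset ℕ) := by simp [hjk, hjl, hjr]
  have hmem2 : k ∉ ({l, r} : Finset ℕ) := by simp [hkl, hkr]
  have hmem3 : l ∉ ({r} : Finset ℕ) := by simp [hlr]
  have hprod : (fun ω : ∀ i, Y i => ∏ i ∈ ({j, k, l, r} : Finset ℕ), u i (ω i)) =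
      fun ω : ∀ i, Y i => v (ω j) * w (ω k) * x (ω l) * z (ω r) := by
    funext ω
    rw [Finset.prod_insert hmem, Finset.prod_insert hmem2, Finset.prod_insert hmem3,
      Finset.prod_singleton, huj, huk, hul, hur]
    ring
  have hprod2 : (∏ i ∈ ({j, k, l, r} : Finset ℕ), ∫ ω, u i (ω i) ∂μ) =
      (∫ ω, v (ω j) ∂μ) * (∫ ω, w (ω k) ∂μ) * (∫ ω, x (ω l) ∂μ) * ∫ ω, z (ω r) ∂μ := by
    rw [Finset.prod_insert hmem, Finset.prod_insert hmem2, Finset.prod_insert hmem3,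
      Finset.prod_singleton, huj, huk, hul, hur]
    ring
  rw [hprod, hprod2] at h
  exact h

end Aux

/-- Existence of a bounded mean-zero test function correlating with a nonzero
mean-zero integrable function. -/
private lemma exists_test_fun' {α : Type*} [MeasurableSpace α] (ρ : Measure α)
    [IsProbabilityMeasure ρ]
    (G : α → ℝ) (hG : Measurable G) (hGint : Integrable G ρ)
    (hGmean : ∫ y, G y ∂ρ = 0) (hne : ¬ (G =ᵐ[ρ] 0)) :
    ∃ φ : α → ℝ, Measurable φ ∧ (∀ y, ‖φ y‖ ≤ 2) ∧
      ∫ y, φ y ∂ρ = 0 ∧ 0 < ∫ y, G y * φ y ∂ρ ∧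
      Integrable φ ρ ∧ Integrable (fun y => G y * φ y) ρ := by
  classical
  set sgn : ℝ → ℝ := fun t => if 0 ≤ t then 1 else -1 with hsgn_def
  have hsgn_meas : Measurable sgn :=
    Measurable.ite measurableSet_Ici measurable_const measurable_const
  have hsgn_bd : ∀ t : ℝ, ‖sgn t‖ ≤ 1 := by
    intro t; by_cases h : 0 ≤ t <;> simp [hsgn_def, h]
  have hsgn_mul : ∀ t : ℝ, t * sgn t = |t| := by
    intro t
    by_cases h : 0 ≤ t
    · simp [hsgn_def, h, abs_of_nonneg h]
    · push_neg at h
      simp [hsgn_def, not_le.mpr h, abs_of_neg h]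
  have hsint : Integrable (fun y => sgn (G y)) ρ := by
    have h := (integrable_const (μ := ρ) (1:ℝ)).bdd_mul
      (f := fun y => sgn (G y)) (c := 1)
      ((hsgn_meas.comp hG).aestronglyMeasurable)
      (Eventually.of_forall fun y => hsgn_bd _)
    simpa using h
  set c : ℝ := ∫ y, sgn (G y) ∂ρ with hc_def
  have hc : ‖c‖ ≤ 1 := by
    have := norm_integral_le_of_norm_le_const (μ := ρ)
      (f := fun y => sgn (G y)) (C := 1) (Eventually.of_forall fun y => hsgn_bd _)
    simpa using this
  have habs_int : Integrable (fun y => |G y|) ρ := hGint.abs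
  have habs_pos : 0 < ∫ y, |G y| ∂ρ := by
    rcases lt_or_eq_of_le (integral_nonneg (f := fun y => |G y|) (fun y => abs_nonneg (G y))) with h | h
    · exact h
    · exfalso
      apply hne
      have h0 := (integral_eq_zero_iff_of_nonneg
        (fun y => abs_nonneg (G y)) habs_int).mp h.symm
      filter_upwards [h0] with y hy
      simpa [abs_eq_zero] using hy
  have hGint2 : Integrable (fun y => G y * sgn (G y)) ρ := by
    have h := hGint.bdd_mul (f := fun y => sgn (G y)) (c := 1)
      ((hsgn_meas.comp hG).aestronglyMeasurable)
      (Eventually.of_forall fun y => hsgn_bd _)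
    refine h.congr (Eventually.of_forall fun y => ?_)
    ring
  refine ⟨fun y => sgn (G y) - c, (hsgn_meas.comp hG).sub measurable_const, ?_, ?_, ?_, ?_, ?_⟩
  · intro y
    calc ‖sgn (G y) - c‖ ≤ ‖sgn (G y)‖ + ‖c‖ := norm_sub_le _ _
      _ ≤ 1 + 1 := add_le_add (hsgn_bd _) hc
      _ = 2 := by norm_num
  · rw [integral_sub hsint (integrable_const c), integral_const]
    simp [hc_def]
  · have : (fun y => G y * (sgn (G y) - c)) =
        fun y => G y * sgn (G y) - c * G y := by funext y; ring
    rw [this, integral_sub hGint2 (hGint.const_mul c), integral_const_mul, hGmean]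
    simp_rw [hsgn_mul]
    simpa using habs_pos
  · exact hsint.sub (integrable_const c)
  · have : (fun y => G y * (sgn (G y) - c)) =
        fun y => G y * sgn (G y) - c * G y := by funext y; ring
    rw [this]
    exact hGint2.sub (hGint.const_mul c)

/-- If on a product of probability spaces (with independent coordinates) the centered
indicator `1_A − μ(A)` of a measurable set `A` decomposes in `L²` as a convergent sum
`∑ₙ fₙ(yₙ)` of zero-mean functions of the individual coordinates, then at most one `fₙ`
is nonzero. -/
theorem at_most_one_nonzero_of_indicator_decomposition
    {Y : ℕ → Type*} [∀ n, MeasurableSpace (Y n)]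
    (ν : ∀ n, Measure (Y n)) [∀ n, IsProbabilityMeasure (ν n)]
    (μ : Measure (∀ n, Y n)) [IsProbabilityMeasure μ]
    (hmarginal : ∀ n, μ.map (fun ω => ω n) = ν n)
    (hindep : iIndepFun (fun n => fun ω : ∀ k, Y k => ω n) μ)
    (F : ∀ n, Y n → ℝ) (hFmeas : ∀ n, Measurable (F n))
    (hFmean : ∀ n, ∫ y, F n y ∂(ν n) = 0)
    (fL : ℕ → Lp ℝ 2 μ)
    (hfL : ∀ n, (fL n : (∀ k, Y k) → ℝ) =ᵐ[μ] fun ω => F n (ω n))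
    (A : Set (∀ n, Y n)) (hA : MeasurableSet A)
    (g : Lp ℝ 2 μ) (hsum : HasSum fL g)
    (hg : (g : (∀ k, Y k) → ℝ) =ᵐ[μ] fun ω => A.indicator (fun _ => (1:ℝ)) ω - (μ A).toReal) :
    ∀ m n : ℕ, fL m ≠ 0 → fL n ≠ 0 → m = n := by
  classical
  intro m n hm hn
  by_contra hmn'
  have hmn : m ≠ n := hmn'
  have hcoord : ∀ k, Measurable fun ω : ∀ i, Y i => ω k := fun k => measurable_pi_apply k
  -- transfer of integrals and integrability along the marginal maps
  have intmap : ∀ (k : ℕ) (v : Y k → ℝ), Measurable v →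
      ∫ ω, v (ω k) ∂μ = ∫ y, v y ∂ν k := by
    intro k v hv
    rw [← hmarginal k, integral_map (hcoord k).aemeasurable
      (by rw [hmarginal k]; exact hv.aestronglyMeasurable)]
  have intg : ∀ (k : ℕ) (v : Y k → ℝ), Measurable v → Integrable v (ν k) →
      Integrable (fun ω : ∀ i, Y i => v (ω k)) μ := by
    intro k v hv hvi
    rw [← hmarginal k] at hvi
    exact (integrable_map_measure (by rw [hmarginal k]; exact hv.aestronglyMeasurable)
      (hcoord k).aemeasurable).mp hvi
  have hmem2 : ∀ k, MemLp (fun ω : ∀ i, Y i => F k (ω k)) 2 μ :=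
    fun k => (Lp.memLp (fL k)).ae_eq (hfL k)
  have hνmem : ∀ k, MemLp (F k) 2 (ν k) := by
    intro k
    rw [← hmarginal k]
    exact (memLp_map_measure_iff (by rw [hmarginal k]; exact (hFmeas k).aestronglyMeasurable)
      (hcoord k).aemeasurable).mpr (hmem2 k)
  have hνint : ∀ k, Integrable (F k) (ν k) := fun k => (hνmem k).integrable one_le_two
  have hνsq : ∀ k, Integrable (fun y => F k y * F k y) (ν k) := by
    intro k
    have := (hνmem k).integrable_sq
    simpa [pow_two] using this
  have hintμF : ∀ k, Integrable (fun ω : ∀ i, Y i => F k (ω k)) μ :=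
    fun k => intg k (F k) (hFmeas k) (hνint k)
  have hmeanμ : ∀ k, ∫ ω, F k (ω k) ∂μ = 0 := by
    intro k; rw [intmap k (F k) (hFmeas k)]; exact hFmean k
  -- nonvanishing of F m, F n
  have hFne : ∀ k, fL k ≠ 0 → ¬ (F k =ᵐ[ν k] 0) := by
    intro k hk h0
    apply hk
    rw [Lp.eq_zero_iff_ae_eq_zero]
    have h1 : ∀ᵐ y ∂(ν k), F k y = 0 := by filter_upwards [h0] with y hy; simpa using hy
    have h2 : ∀ᵐ ω ∂μ, F k (ω k) = 0 :=
      ae_of_ae_map (p := fun y => F k y = 0) (hcoord k).aemeasurable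
        (by rwa [hmarginal k])
    filter_upwards [hfL k, h2] with ω hω h2ω
    simp [hω, h2ω]
  -- test functions
  obtain ⟨φ, hφm, hφb, hφ0, haν, hφν, hFφν⟩ :=
    exists_test_fun' (ν m) (F m) (hFmeas m) (hνint m) (hFmean m) (hFne m hm)
  obtain ⟨ψ, hψm, hψb, hψ0, hbν, hψν, hFψν⟩ :=
    exists_test_fun' (ν n) (F n) (hFmeas n) (hνint n) (hFmean n) (hFne n hn)
  set a : ℝ := ∫ y, F m y * φ y ∂ν m with ha_def
  set b : ℝ := ∫ y, F n y * ψ y ∂ν n with hb_def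
  -- μ-level integrability of the building blocks
  have hφμint : Integrable (fun ω : ∀ i, Y i => φ (ω m)) μ := intg m φ hφm hφν
  have hψμint : Integrable (fun ω : ∀ i, Y i => ψ (ω n)) μ := intg n ψ hψm hψν
  have hFφμ : Integrable (fun ω : ∀ i, Y i => F m (ω m) * φ (ω m)) μ :=
    intg m (fun y => F m y * φ y) ((hFmeas m).mul hφm) hFφν
  have hFψμ : Integrable (fun ω : ∀ i, Y i => F n (ω n) * ψ (ω n)) μ :=
    intg n (fun y => F n y * ψ y) ((hFmeas n).mul hψm) hFψν
  have hF2φν : Integrable (fun y => F m y * F m y * φ y) (ν m) := by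
    have h := (hνsq m).bdd_mul (f := φ) (c := 2) hφm.aestronglyMeasurable
      (Eventually.of_forall hφb)
    exact h.congr (Eventually.of_forall fun y => by ring)
  have hF2ψν : Integrable (fun y => F n y * F n y * ψ y) (ν n) := by
    have h := (hνsq n).bdd_mul (f := ψ) (c := 2) hψm.aestronglyMeasurable
      (Eventually.of_forall hψb)
    exact h.congr (Eventually.of_forall fun y => by ring)
  have hF2φμ : Integrable (fun ω : ∀ i, Y i => F m (ω m) * F m (ω m) * φ (ω m)) μ :=
    intg m (fun y => F m y * F m y * φ y) (((hFmeas m).mul (hFmeas m)).mul hφm) hF2φν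
  have hF2ψμ : Integrable (fun ω : ∀ i, Y i => F n (ω n) * F n (ω n) * ψ (ω n)) μ :=
    intg n (fun y => F n y * F n y * ψ y) (((hFmeas n).mul (hFmeas n)).mul hψm) hF2ψν
  have hFFμ : ∀ k, Integrable (fun ω : ∀ i, Y i => F k (ω k) * F k (ω k)) μ :=
    fun k => intg k (fun y => F k y * F k y) ((hFmeas k).mul (hFmeas k)) (hνsq k)
  -- μ-level values
  have haμ : ∫ ω, F m (ω m) * φ (ω m) ∂μ = a :=
    intmap m (fun y => F m y * φ y) ((hFmeas m).mul hφm)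
  have hbμ : ∫ ω, F n (ω n) * ψ (ω n) ∂μ = b :=
    intmap n (fun y => F n y * ψ y) ((hFmeas n).mul hψm)
  have hφ0μ : ∫ ω, φ (ω m) ∂μ = 0 := by rw [intmap m φ hφm]; exact hφ0
  have hψ0μ : ∫ ω, ψ (ω n) ∂μ = 0 := by rw [intmap n ψ hψm]; exact hψ0
  -- the double-product expectations
  have T : ∀ j k : ℕ,
      Integrable (fun ω : ∀ i, Y i => F j (ω j) * F k (ω k) * (φ (ω m) * ψ (ω n))) μ ∧
      ∫ ω, F j (ω j) * F k (ω k) * (φ (ω m) * ψ (ω n)) ∂μ =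
        (if j = m ∧ k = n then a * b else 0) + (if j = n ∧ k = m then a * b else 0) := by
    intro j k
    rcases eq_or_ne m j with rfl | hjm
    · rcases eq_or_ne n k with rfl | hkn
      · -- j = m, k = n
        have h := prod_integral_two' μ hindep hmn (fun y => F m y * φ y) (fun y => F n y * ψ y)
          ((hFmeas m).mul hφm) ((hFmeas n).mul hψm) hFφμ hFψμ
        refine ⟨h.1.congr (Eventually.of_forall fun ω => by ring), ?_⟩
        have e1 : ∫ ω, F m (ω m) * F n (ω n) * (φ (ω m) * ψ (ω n)) ∂μ
            = ∫ ω, (F m (ω m) * φ (ω m)) * (F n (ω n) * ψ (ω n)) ∂μ :=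
          integral_congr_ae (Eventually.of_forall fun ω => by ring)
        rw [e1, h.2, haμ, hbμ]
        simp [hmn, hmn.symm]
      · rcases eq_or_ne m k with rfl | hkm
        · -- j = k = m
          have h := prod_integral_two' μ hindep hmn
            (fun y => F m y * F m y * φ y) ψ
            (((hFmeas m).mul (hFmeas m)).mul hφm) hψm hF2φμ hψμint
          refine ⟨h.1.congr (Eventually.of_forall fun ω => by ring), ?_⟩
          have e1 : ∫ ω, F m (ω m) * F m (ω m) * (φ (ω m) * ψ (ω n)) ∂μ
              = ∫ ω, (F m (ω m) * F m (ω m) * φ (ω m)) * ψ (ω n) ∂μ :=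
            integral_congr_ae (Eventually.of_forall fun ω => by ring)
          rw [e1, h.2, hψ0μ]
          simp [hmn, hmn.symm]
        · -- j = m, k ∉ {m, n}
          have h := prod_integral_three' μ hindep hkm hmn hkn.symm
            (fun y => F m y * φ y) (F k) ψ
            ((hFmeas m).mul hφm) (hFmeas k) hψm hFφμ (hintμF k) hψμint
          refine ⟨h.1.congr (Eventually.of_forall fun ω => by ring), ?_⟩
          have e1 : ∫ ω, F m (ω m) * F k (ω k) * (φ (ω m) * ψ (ω n)) ∂μ
              = ∫ ω, (F m (ω m) * φ (ω m)) * F k (ω k) * ψ (ω n) ∂μ :=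
            integral_congr_ae (Eventually.of_forall fun ω => by ring)
          rw [e1, h.2, hmeanμ k]
          simp [hmn, hmn.symm, hkn.symm, hkm.symm]
    · rcases eq_or_ne n j with rfl | hjn
      · rcases eq_or_ne m k with rfl | hkm
        · -- j = n, k = m
          have h := prod_integral_two' μ hindep hmn (fun y => F m y * φ y) (fun y => F n y * ψ y)
            ((hFmeas m).mul hφm) ((hFmeas n).mul hψm) hFφμ hFψμ
          refine ⟨h.1.congr (Eventually.of_forall fun ω => by ring), ?_⟩
          have e1 : ∫ ω, F n (ω n) * F m (ω m) * (φ (ω m) * ψ (ω n)) ∂μ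
              = ∫ ω, (F m (ω m) * φ (ω m)) * (F n (ω n) * ψ (ω n)) ∂μ :=
            integral_congr_ae (Eventually.of_forall fun ω => by ring)
          rw [e1, h.2, haμ, hbμ]
          simp [hmn, hmn.symm]
        · rcases eq_or_ne n k with rfl | hkn
          · -- j = k = n
            have h := prod_integral_two' μ hindep hmn φ
              (fun y => F n y * F n y * ψ y)
              hφm (((hFmeas n).mul (hFmeas n)).mul hψm) hφμint hF2ψμ
            refine ⟨h.1.congr (Eventually.of_forall fun ω => by ring), ?_⟩
            have e1 : ∫ ω, F n (ω n) * F n (ω n) * (φ (ω m) * ψ (ω n)) ∂μ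
                = ∫ ω, φ (ω m) * (F n (ω n) * F n (ω n) * ψ (ω n)) ∂μ :=
              integral_congr_ae (Eventually.of_forall fun ω => by ring)
            rw [e1, h.2, hφ0μ]
            simp [hmn, hmn.symm]
          · -- j = n, k ∉ {m, n}
            have h := prod_integral_three' μ hindep hmn hkm hkn
              φ (fun y => F n y * ψ y) (F k)
              hφm ((hFmeas n).mul hψm) (hFmeas k) hφμint hFψμ (hintμF k)
            refine ⟨h.1.congr (Eventually.of_forall fun ω => by ring), ?_⟩
            have e1 : ∫ ω, F n (ω n) * F k (ω k) * (φ (ω m) * ψ (ω n)) ∂μ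
                = ∫ ω, φ (ω m) * (F n (ω n) * ψ (ω n)) * F k (ω k) ∂μ :=
              integral_congr_ae (Eventually.of_forall fun ω => by ring)
            rw [e1, h.2, hφ0μ]
            simp [hmn, hmn.symm, hkn.symm, hkm.symm]
      · -- j ∉ {m, n}
        rcases eq_or_ne m k with rfl | hkm
        · -- k = m
          have h := prod_integral_three' μ hindep hjm.symm hjn.symm hmn
            (F j) (fun y => F m y * φ y) ψ
            (hFmeas j) ((hFmeas m).mul hφm) hψm (hintμF j) hFφμ hψμint
          refine ⟨h.1.congr (Eventually.of_forall fun ω => by ring), ?_⟩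
          have e1 : ∫ ω, F j (ω j) * F m (ω m) * (φ (ω m) * ψ (ω n)) ∂μ
              = ∫ ω, F j (ω j) * (F m (ω m) * φ (ω m)) * ψ (ω n) ∂μ :=
            integral_congr_ae (Eventually.of_forall fun ω => by ring)
          rw [e1, h.2, hmeanμ j]
          simp [hjm.symm, hjn.symm, hmn, hmn.symm]
        rcases eq_or_ne n k with rfl | hkn
        · -- k = n
          have h := prod_integral_three' μ hindep hjm.symm hjn.symm hmn
            (F j) φ (fun y => F n y * ψ y)
            (hFmeas j) hφm ((hFmeas n).mul hψm) (hintμF j) hφμint hFψμ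
          refine ⟨h.1.congr (Eventually.of_forall fun ω => by ring), ?_⟩
          have e1 : ∫ ω, F j (ω j) * F n (ω n) * (φ (ω m) * ψ (ω n)) ∂μ
              = ∫ ω, F j (ω j) * φ (ω m) * (F n (ω n) * ψ (ω n)) ∂μ :=
            integral_congr_ae (Eventually.of_forall fun ω => by ring)
          rw [e1, h.2, hmeanμ j]
          simp [hjm.symm, hjn.symm, hmn, hmn.symm]
        rcases eq_or_ne j k with rfl | hjk
        · -- j = k ∉ {m, n}
          have h := prod_integral_three' μ hindep hjm.symm hjn.symm hmn
            (fun y => F j y * F j y) φ ψ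
            ((hFmeas j).mul (hFmeas j)) hφm hψm (hFFμ j) hφμint hψμint
          refine ⟨h.1.congr (Eventually.of_forall fun ω => by ring), ?_⟩
          have e1 : ∫ ω, F j (ω j) * F j (ω j) * (φ (ω m) * ψ (ω n)) ∂μ
              = ∫ ω, (F j (ω j) * F j (ω j)) * φ (ω m) * ψ (ω n) ∂μ :=
            integral_congr_ae (Eventually.of_forall fun ω => by ring)
          rw [e1, h.2, hφ0μ]
          simp [hjm.symm, hjn.symm]
        · -- all four distinct
          have h := prod_integral_four' μ hindep hjk hjm.symm hjn.symm hkm.symm hkn.symm hmn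
            (F j) (F k) φ ψ (hFmeas j) (hFmeas k) hφm hψm
            (hintμF j) (hintμF k) hφμint hψμint
          refine ⟨h.1.congr (Eventually.of_forall fun ω => by ring), ?_⟩
          have e1 : ∫ ω, F j (ω j) * F k (ω k) * (φ (ω m) * ψ (ω n)) ∂μ
              = ∫ ω, F j (ω j) * F k (ω k) * φ (ω m) * ψ (ω n) ∂μ :=
            integral_congr_ae (Eventually.of_forall fun ω => by ring)
          rw [e1, h.2, hmeanμ j]
          simp [hjm.symm, hjn.symm, hkm.symm, hkn.symm]
  -- the single-product expectations
  have S : ∀ k : ℕ,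
      Integrable (fun ω : ∀ i, Y i => F k (ω k) * (φ (ω m) * ψ (ω n))) μ ∧
      ∫ ω, F k (ω k) * (φ (ω m) * ψ (ω n)) ∂μ = 0 := by
    intro k
    rcases eq_or_ne m k with rfl | hkm
    · have h := prod_integral_two' μ hindep hmn (fun y => F m y * φ y) ψ
        ((hFmeas m).mul hφm) hψm hFφμ hψμint
      refine ⟨h.1.congr (Eventually.of_forall fun ω => by ring), ?_⟩
      have e1 : ∫ ω, F m (ω m) * (φ (ω m) * ψ (ω n)) ∂μ
          = ∫ ω, (F m (ω m) * φ (ω m)) * ψ (ω n) ∂μ :=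
        integral_congr_ae (Eventually.of_forall fun ω => by ring)
      rw [e1, h.2, hψ0μ, mul_zero]
    rcases eq_or_ne n k with rfl | hkn
    · have h := prod_integral_two' μ hindep hmn φ (fun y => F n y * ψ y)
        hφm ((hFmeas n).mul hψm) hφμint hFψμ
      refine ⟨h.1.congr (Eventually.of_forall fun ω => by ring), ?_⟩
      have e1 : ∫ ω, F n (ω n) * (φ (ω m) * ψ (ω n)) ∂μ
          = ∫ ω, φ (ω m) * (F n (ω n) * ψ (ω n)) ∂μ :=
        integral_congr_ae (Eventually.of_forall fun ω => by ring)
      rw [e1, h.2, hφ0μ, zero_mul]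
    · have h := prod_integral_three' μ hindep hkm.symm hkn.symm hmn
        (F k) φ ψ (hFmeas k) hφm hψm (hintμF k) hφμint hψμint
      refine ⟨h.1.congr (Eventually.of_forall fun ω => by ring), ?_⟩
      have e1 : ∫ ω, F k (ω k) * (φ (ω m) * ψ (ω n)) ∂μ
          = ∫ ω, F k (ω k) * φ (ω m) * ψ (ω n) ∂μ :=
        integral_congr_ae (Eventually.of_forall fun ω => by ring)
      rw [e1, h.2, hmeanμ k, zero_mul, zero_mul]
  -- notation for the bounded weight
  set Φ : (∀ i, Y i) → ℝ := fun ω => φ (ω m) * ψ (ω n) with hΦ_def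
  have hΦmeas : Measurable Φ := (hφm.comp (hcoord m)).mul (hψm.comp (hcoord n))
  have hΦb : ∀ ω, ‖Φ ω‖ ≤ 4 := by
    intro ω
    rw [hΦ_def]
    calc ‖φ (ω m) * ψ (ω n)‖ = ‖φ (ω m)‖ * ‖ψ (ω n)‖ := norm_mul _ _
      _ ≤ 2 * 2 := mul_le_mul (hφb _) (hψb _) (norm_nonneg _) (by norm_num)
      _ = 4 := by norm_num
  have hΦint : Integrable Φ μ := by
    have h := (integrable_const (μ := μ) (1:ℝ)).bdd_mul (f := Φ) (c := 4)
      hΦmeas.aestronglyMeasurable (Eventually.of_forall hΦb)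
    simpa using h
  have hΦ0 : ∫ ω, Φ ω ∂μ = 0 := by
    have h := prod_integral_two' μ hindep hmn φ ψ hφm hψm hφμint hψμint
    rw [hΦ_def]
    rw [h.2, hφ0μ, zero_mul]
  -- products of L² elements against Φ
  have CSint : ∀ P Q : Lp ℝ 2 μ, Integrable (fun ω => P ω * Q ω) μ := by
    intro P Q
    have h := L2.integrable_inner (𝕜 := ℝ) P Q
    refine h.congr (Eventually.of_forall fun ω => ?_)
    simp [RCLike.inner_apply]; ring
  have CSle : ∀ P Q : Lp ℝ 2 μ, ∫ ω, |P ω| * |Q ω| ∂μ ≤ ‖P‖ * ‖Q‖ := by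
    intro P Q
    have hnorm : ∀ R : Lp ℝ 2 μ, ‖(|R| : Lp ℝ 2 μ)‖ = ‖R‖ := by
      intro R
      rw [Lp.norm_def, Lp.norm_def]
      congr 1
      calc eLpNorm (|R| : Lp ℝ 2 μ) 2 μ = eLpNorm (fun x => |R x|) 2 μ :=
            eLpNorm_congr_ae (Lp.coeFn_abs R)
        _ = eLpNorm (fun x => ‖R x‖) 2 μ := by simp [Real.norm_eq_abs]
        _ = eLpNorm R 2 μ := eLpNorm_norm _
    have h1 := real_inner_le_norm (|P| : Lp ℝ 2 μ) (|Q| : Lp ℝ 2 μ)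
    rw [hnorm, hnorm] at h1
    refine le_trans (le_of_eq ?_) h1
    rw [L2.inner_def]
    apply integral_congr_ae
    filter_upwards [Lp.coeFn_abs P, Lp.coeFn_abs Q] with ω h2 h3
    rw [h2, h3]
    simp [RCLike.inner_apply]; ring
  have intPQW : ∀ P Q : Lp ℝ 2 μ, Integrable (fun ω => P ω * Q ω * Φ ω) μ := by
    intro P Q
    have h := (CSint P Q).bdd_mul (f := Φ) (c := 4)
      hΦmeas.aestronglyMeasurable (Eventually.of_forall hΦb)
    exact h.congr (Eventually.of_forall fun ω => by ring)
  have bnd : ∀ P Q : Lp ℝ 2 μ, |∫ ω, P ω * Q ω * Φ ω ∂μ| ≤ 4 * (‖P‖ * ‖Q‖) := by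
    intro P Q
    have h1 : |∫ ω, P ω * Q ω * Φ ω ∂μ| ≤ ∫ ω, ‖P ω * Q ω * Φ ω‖ ∂μ := by
      rw [← Real.norm_eq_abs]
      exact norm_integral_le_integral_norm _
    have h2 : ∫ ω, ‖P ω * Q ω * Φ ω‖ ∂μ ≤ ∫ ω, 4 * (|P ω| * |Q ω|) ∂μ := by
      apply integral_mono (intPQW P Q).norm (((CSint P Q).abs.const_mul 4).congr
        (Eventually.of_forall fun ω => by simp [abs_mul]))
      intro ω
      calc ‖P ω * Q ω * Φ ω‖ = |P ω| * |Q ω| * ‖Φ ω‖ := by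
            simp [Real.norm_eq_abs, abs_mul]
        _ ≤ |P ω| * |Q ω| * 4 := by
            apply mul_le_mul_of_nonneg_left (hΦb ω)
            positivity
        _ = 4 * (|P ω| * |Q ω|) := by ring
    calc |∫ ω, P ω * Q ω * Φ ω ∂μ| ≤ ∫ ω, 4 * (|P ω| * |Q ω|) ∂μ := le_trans h1 h2
      _ = 4 * ∫ ω, |P ω| * |Q ω| ∂μ := integral_const_mul _ _
      _ ≤ 4 * (‖P‖ * ‖Q‖) := by
          apply mul_le_mul_of_nonneg_left (CSle P Q)
          norm_num
  -- the constant-one element of L²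
  have hone_mem : MemLp (fun _ : ∀ i, Y i => (1:ℝ)) 2 μ := memLp_const 1
  set oneL : Lp ℝ 2 μ := hone_mem.toLp _ with honeL_def
  have hone_coe : (oneL : (∀ i, Y i) → ℝ) =ᵐ[μ] fun _ => (1:ℝ) := MemLp.coeFn_toLp _
  -- partial sums
  set hp : ℕ → Lp ℝ 2 μ := fun N => ∑ i ∈ Finset.range N, fL i with hp_def
  have hcoe : ∀ s : Finset ℕ,
      ((∑ i ∈ s, fL i : Lp ℝ 2 μ) : (∀ i, Y i) → ℝ) =ᵐ[μ] fun ω => ∑ i ∈ s, F i (ω i) := by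
    intro s
    induction s using Finset.induction_on with
    | empty => simpa [Pi.zero_def] using Lp.coeFn_zero ℝ 2 μ
    | @insert c s hc ih =>
        have h1 := Lp.coeFn_add (fL c) (∑ i ∈ s, fL i)
        rw [Finset.sum_insert hc]
        filter_upwards [h1, hfL c, ih] with ω hω1 hω2 hω3
        rw [hω1]
        simp only [Pi.add_apply, hω2, hω3]
        rw [Finset.sum_insert hc]
  have hδ : Tendsto (fun N => ‖hp N - g‖) atTop (nhds 0) := by
    have h := hsum.tendsto_sum_nat
    rwa [tendsto_iff_norm_sub_tendsto_zero] at h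
  -- first order: ∫ g Φ = 0
  have evN1 : ∀ N : ℕ, ∫ ω, (hp N) ω * Φ ω ∂μ = 0 := by
    intro N
    have e1 : ∫ ω, (hp N) ω * Φ ω ∂μ
        = ∫ ω, (∑ i ∈ Finset.range N, F i (ω i)) * Φ ω ∂μ := by
      apply integral_congr_ae
      filter_upwards [hcoe (Finset.range N)] with ω hω
      rw [hp_def, hω]
    rw [e1]
    have e2 : (fun ω : ∀ i, Y i => (∑ i ∈ Finset.range N, F i (ω i)) * Φ ω)
        = fun ω => ∑ i ∈ Finset.range N, F i (ω i) * Φ ω := by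
      funext ω; rw [Finset.sum_mul]
    rw [e2, integral_finset_sum _ (fun i _ => (S i).1)]
    exact Finset.sum_eq_zero fun i _ => (S i).2
  have hint_gΦ : Integrable (fun ω => g ω * Φ ω) μ := by
    have h := intPQW g oneL
    refine h.congr ?_
    filter_upwards [hone_coe] with ω hω
    rw [hω]; ring
  have hint_hpΦ : ∀ N, Integrable (fun ω => (hp N) ω * Φ ω) μ := by
    intro N
    have h := intPQW (hp N) oneL
    refine h.congr ?_
    filter_upwards [hone_coe] with ω hω
    rw [hω]; ring
  have hgΦ0 : ∫ ω, g ω * Φ ω ∂μ = 0 := by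
    have htend : Tendsto (fun N => ∫ ω, (hp N) ω * Φ ω ∂μ) atTop
        (nhds (∫ ω, g ω * Φ ω ∂μ)) := by
      rw [tendsto_iff_dist_tendsto_zero]
      apply squeeze_zero (fun N => dist_nonneg)
        (g := fun N => 4 * (‖hp N - g‖ * ‖oneL‖))
      · intro N
        rw [Real.dist_eq]
        have e3 : ∫ ω, (hp N) ω * Φ ω ∂μ - ∫ ω, g ω * Φ ω ∂μ
            = ∫ ω, (hp N - g) ω * oneL ω * Φ ω ∂μ := by
          rw [← integral_sub (hint_hpΦ N) hint_gΦ]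
          apply integral_congr_ae
          filter_upwards [Lp.coeFn_sub (hp N) g, hone_coe] with ω h1 h2
          rw [h1, h2]
          simp only [Pi.sub_apply]
          ring
        rw [e3]
        exact bnd _ _
      · have : Tendsto (fun N => ‖hp N - g‖ * ‖oneL‖) atTop (nhds (0 * ‖oneL‖)) :=
          hδ.mul_const _
        rw [zero_mul] at this
        simpa using this.const_mul 4
    have htend0 : Tendsto (fun N => ∫ ω, (hp N) ω * Φ ω ∂μ) atTop (nhds 0) := by
      simp only [evN1]
      exact tendsto_const_nhds
    exact tendsto_nhds_unique htend htend0
  -- the two-valued identity kills ∫ g g Φ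
  set c : ℝ := (μ A).toReal with hc_def
  have hggΦ : ∫ ω, g ω * g ω * Φ ω ∂μ = 0 := by
    have hptw : (fun ω => g ω * g ω * Φ ω)
        =ᵐ[μ] fun ω => (1 - 2*c) * (g ω * Φ ω) + (c*(1-c)) * Φ ω := by
      filter_upwards [hg] with ω hω
      rw [hω]
      by_cases hωA : ω ∈ A
      · rw [Set.indicator_of_mem hωA]
        ring
      · rw [Set.indicator_of_notMem hωA]
        ring
    rw [integral_congr_ae hptw, integral_add (hint_gΦ.const_mul _) (hΦint.const_mul _),
      integral_const_mul, integral_const_mul, hgΦ0, hΦ0]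
    ring
  -- second order: the partial sums have constant value 2ab eventually
  have ev2 : ∀ N : ℕ, m ∈ Finset.range N → n ∈ Finset.range N →
      ∫ ω, (hp N) ω * (hp N) ω * Φ ω ∂μ = 2 * (a * b) := by
    intro N hmN hnN
    set s : Finset ℕ := Finset.range N with hs_def
    have e1 : ∫ ω, (hp N) ω * (hp N) ω * Φ ω ∂μ
        = ∫ ω, ∑ j ∈ s, ∑ k ∈ s, F j (ω j) * F k (ω k) * Φ ω ∂μ := by
      apply integral_congr_ae
      filter_upwards [hcoe s] with ω hω
      rw [hp_def, hω, Finset.sum_mul_sum]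
      rw [Finset.sum_mul]
      apply Finset.sum_congr rfl
      intro j _
      rw [Finset.sum_mul]
    rw [e1, integral_finset_sum _ (fun j _ => integrable_finset_sum _ (fun k _ => (T j k).1))]
    have e2 : ∀ j ∈ s, ∫ ω, ∑ k ∈ s, F j (ω j) * F k (ω k) * Φ ω ∂μ
        = ∑ k ∈ s, ((if j = m ∧ k = n then a * b else 0) +
            (if j = n ∧ k = m then a * b else 0)) := by
      intro j _
      rw [integral_finset_sum _ (fun k _ => (T j k).1)]
      exact Finset.sum_congr rfl fun k _ => (T j k).2
    rw [Finset.sum_congr rfl e2]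
    have e3 : ∀ (x y : ℕ), x ∈ s → y ∈ s →
        (∑ j ∈ s, ∑ k ∈ s, if j = x ∧ k = y then a * b else 0) = a * b := by
      intro x y hx hy
      have h4 : ∀ j, (∑ k ∈ s, if j = x ∧ k = y then a * b else 0)
          = if j = x then a * b else 0 := by
        intro j
        by_cases hj : j = x
        · subst hj
          simp [Finset.sum_ite_eq', hy]
        · simp [hj]
      simp_rw [h4]
      rw [Finset.sum_ite_eq' s x (fun _ => a * b)]
      simp [hx]
    calc (∑ j ∈ s, ∑ k ∈ s, ((if j = m ∧ k = n then a * b else 0) +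
            (if j = n ∧ k = m then a * b else 0)))
        = (∑ j ∈ s, ∑ k ∈ s, if j = m ∧ k = n then a * b else 0)
          + ∑ j ∈ s, ∑ k ∈ s, if j = n ∧ k = m then a * b else 0 := by
          rw [← Finset.sum_add_distrib]
          apply Finset.sum_congr rfl
          intro j _
          rw [← Finset.sum_add_distrib]
      _ = a * b + a * b := by rw [e3 m n hmN hnN, e3 n m hnN hmN]
      _ = 2 * (a * b) := by ring
  -- convergence of the second-order integrals
  have htend2 : Tendsto (fun N => ∫ ω, (hp N) ω * (hp N) ω * Φ ω ∂μ) atTop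
      (nhds (∫ ω, g ω * g ω * Φ ω ∂μ)) := by
    rw [tendsto_iff_dist_tendsto_zero]
    apply squeeze_zero (fun N => dist_nonneg)
      (g := fun N => 4 * (‖hp N - g‖ * (‖hp N - g‖ + 2 * ‖g‖)))
    · intro N
      rw [Real.dist_eq]
      have e3 : ∫ ω, (hp N) ω * (hp N) ω * Φ ω ∂μ - ∫ ω, g ω * g ω * Φ ω ∂μ
          = ∫ ω, (hp N - g) ω * (hp N + g) ω * Φ ω ∂μ := by
        rw [← integral_sub (intPQW (hp N) (hp N)) (intPQW g g)]
        apply integral_congr_ae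
        filter_upwards [Lp.coeFn_sub (hp N) g, Lp.coeFn_add (hp N) g] with ω h1 h2
        rw [h1, h2]
        simp only [Pi.sub_apply, Pi.add_apply]
        ring
      rw [e3]
      refine le_trans (bnd _ _) ?_
      have h5 : ‖hp N + g‖ ≤ ‖hp N - g‖ + 2 * ‖g‖ := by
        calc ‖hp N + g‖ = ‖(hp N - g) + (g + g)‖ := by congr 1; abel
          _ ≤ ‖hp N - g‖ + ‖g + g‖ := norm_add_le _ _
          _ ≤ ‖hp N - g‖ + 2 * ‖g‖ := by
              have := norm_add_le g g
              linarith
      have h6 : (0:ℝ) ≤ ‖hp N - g‖ := norm_nonneg _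
      have := mul_le_mul_of_nonneg_left h5 h6
      linarith
    · have h7 : Tendsto (fun N => ‖hp N - g‖ * (‖hp N - g‖ + 2 * ‖g‖)) atTop
          (nhds (0 * (0 + 2 * ‖g‖))) := hδ.mul (hδ.add_const _)
      rw [zero_mul] at h7
      simpa using h7.const_mul 4
  -- conclusion
  have hev : ∀ᶠ N in atTop, ∫ ω, (hp N) ω * (hp N) ω * Φ ω ∂μ = 2 * (a * b) := by
    filter_upwards [eventually_ge_atTop (max m n + 1)] with N hN
    apply ev2 <;> rw [Finset.mem_range] <;> omega
  have htendc : Tendsto (fun N => ∫ ω, (hp N) ω * (hp N) ω * Φ ω ∂μ) atTop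
      (nhds (2 * (a * b))) :=
    Tendsto.congr' (Filter.EventuallyEq.symm hev) tendsto_const_nhds
  have hfinal : 2 * (a * b) = 0 := by
    rw [hggΦ] at htend2
    exact tendsto_nhds_unique htendc htend2
  nlinarith [haν, hbν]
end

section
/- Let S̄ be a unitary operator on a Hilbert space H, let U be an isometry on H commuting suitably so that J* = U* ∘ ∑_{n=0}^∞ 2^{-(n+1)} S̄^{-n} (strong convergence), where U* has nontrivial kernel. Then for every G ∈ ker U*, the vector F = −(1/2)·S̄^{-1}G + G lies in ker J*, and F ≠ 0 whenever G ≠ 0. -/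
/-- If `J* = U* ∘ ∑ₙ 2^{-(n+1)} S̄^{-n}` with `U*` having nontrivial kernel, then for
every `G ∈ ker U*` the vector `F = −(1/2)·S̄^{-1}G + G` lies in `ker J*`, and `F ≠ 0`
whenever `G ≠ 0`. -/
theorem kernel_of_geometric_markov_adjoint
    {H : Type*} [NormedAddCommGroup H] [InnerProductSpace ℂ H] [CompleteSpace H]
    (Sbar : H ≃ₗᵢ[ℂ] H) (Ustar Jstar : H →L[ℂ] H)
    (hker : ∃ G : H, G ≠ 0 ∧ Ustar G = 0)
    (hJ : ∀ x : H, Jstar x = Ustar (∑' n : ℕ, ((1:ℂ) / 2 ^ (n + 1)) • (Sbar.symm ^ n) x)) :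
    ∀ G : H, Ustar G = 0 →
      Jstar (-((1:ℂ)/2) • Sbar.symm G + G) = 0 ∧
        (G ≠ 0 → -((1:ℂ)/2) • Sbar.symm G + G ≠ 0) := by
  intro G hG
  set F : H := -((1:ℂ)/2) • Sbar.symm G + G with hF
  set g : ℕ → H := fun n => ((1:ℂ) / 2 ^ (n + 1)) • (Sbar.symm ^ n) G with hg
  have hmul : ∀ n : ℕ, (Sbar.symm ^ (n + 1)) G = (Sbar.symm ^ n) (Sbar.symm G) := by
    intro n
    rw [pow_succ]
    rfl
  have hterm : ∀ n : ℕ,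
      ((1:ℂ) / 2 ^ (n + 1)) • (Sbar.symm ^ n) F = g n - g (n + 1) := by
    intro n
    simp only [hF, hg, map_add, map_smul, smul_add, smul_smul, hmul]
    rw [sub_eq_add_neg, add_comm]
    congr 1
    rw [← neg_smul]
    congr 1
    field_simp
    ring
  have hgzero : Filter.Tendsto g Filter.atTop (nhds 0) := by
    have hnorm : ∀ n : ℕ, ‖g n‖ = (1 / 2) ^ (n + 1) * ‖G‖ := by
      intro n
      simp [hg, norm_smul, LinearIsometryEquiv.norm_map]
    rw [tendsto_zero_iff_norm_tendsto_zero]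
    simp only [hnorm]
    have : Filter.Tendsto (fun n : ℕ => ((1:ℝ) / 2) ^ (n + 1)) Filter.atTop (nhds 0) := by
      have h := tendsto_pow_atTop_nhds_zero_of_lt_one (by norm_num : (0:ℝ) ≤ 1/2)
        (by norm_num : (1:ℝ)/2 < 1)
      exact h.comp (Filter.tendsto_add_atTop_nat 1)
    simpa using this.mul_const ‖G‖
  have hsum : HasSum (fun n => ((1:ℂ) / 2 ^ (n + 1)) • (Sbar.symm ^ n) F) (g 0) := by
    have hps : ∀ N : ℕ, ∑ n ∈ Finset.range N, (g n - g (n + 1)) = g 0 - g N := by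
      intro N
      exact Finset.sum_range_sub' g N
    have : Filter.Tendsto (fun N => ∑ n ∈ Finset.range N, (g n - g (n + 1)))
        Filter.atTop (nhds (g 0)) := by
      simp only [hps]
      simpa using (tendsto_const_nhds (x := g 0)).sub hgzero
    have hsummable : Summable (fun n => ((1:ℂ) / 2 ^ (n + 1)) • (Sbar.symm ^ n) F) := by
      apply Summable.of_norm
      have : ∀ n : ℕ, ‖((1:ℂ) / 2 ^ (n + 1)) • (Sbar.symm ^ n) F‖
          = (1/2 : ℝ) ^ (n + 1) * ‖F‖ := by
        intro n
        simp [norm_smul, LinearIsometryEquiv.norm_map]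
      simp only [this]
      exact (((summable_geometric_of_lt_one (by norm_num) (by norm_num :
        (1:ℝ)/2 < 1)).comp_injective (add_left_injective 1)).mul_right ‖F‖)
    rw [hsummable.hasSum_iff_tendsto_nat]
    simp only [hterm]
    exact this
  have hJF : Jstar F = 0 := by
    rw [hJ F, hsum.tsum_eq]
    have : Ustar (g 0) = ((1:ℂ)/2 ^ (0+1)) • Ustar G := by
      simp [hg, map_smul]
    simp [this, hG]
  refine ⟨hJF, ?_⟩
  intro hGne hFz
  have : G = ((1:ℂ)/2) • Sbar.symm G := by
    have := hFz
    rw [hF] at this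
    have h' : G = -(-((1:ℂ)/2) • Sbar.symm G) := by
      rw [eq_neg_iff_add_eq_zero, add_comm]; exact this
    simpa using h'
  have hn : ‖G‖ = (1/2 : ℝ) * ‖G‖ := by
    calc ‖G‖ = ‖((1:ℂ)/2) • Sbar.symm G‖ := by rw [← this]
    _ = (1/2 : ℝ) * ‖G‖ := by
        rw [norm_smul, LinearIsometryEquiv.norm_map]
        norm_num
  have : ‖G‖ = 0 := by linarith
  exact hGne (norm_eq_zero.mp this)
end
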